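/- arXiv:1310.5788 — 2 statements merged into one kernel-verified Lean document; each statement's English description precedes it below -/
import Mathlib

section
/- Let G̃ be an enhanced graph and let S̃ be a non-split 5-configuration of G̃. Then: (1) if three edges of S̃ form a triangle of G̃, then all three of these edges are contract-proof; (2) if S̃ contains all three edges incident with some vertex of degree 3 of G̃, then all three of these edges are delete-proof. -/
/-!  Common definitions: multigraphs, separations, width, minors,
Kirchhoff/Dodgson polynomials, Feynman 5-splitting, enhanced graphs. -/

noncomputable section

attribute [local instance] Classical.propDecidable

/-- A finite multigraph, given by finite vertex and edge types together with
source and target maps (an arbitrary orientation of each edge). -/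
structure Multigraph : Type 1 where
  V : Type
  E : Type
  [fintypeV : Fintype V]
  [fintypeE : Fintype E]
  src : E → V
  tgt : E → V

attribute [instance] Multigraph.fintypeV Multigraph.fintypeE

namespace Multigraph

variable (G : Multigraph)

/-- The endpoints of an edge as an unordered pair. -/
def ends (e : G.E) : Sym2 G.V := s(G.src e, G.tgt e)

/-- Incidence of a vertex with an edge. -/
def inc (v : G.V) (e : G.E) : Prop := v = G.src e ∨ v = G.tgt e

/-- `V(G_A)`: the vertices of the subgraph induced by an edge set `A`. -/
def edgeVerts (A : Set G.E) : Set G.V := {v | ∃ e ∈ A, G.inc v e}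

/-- The order of the separation `(A, Aᶜ)` of the graph `G`,
i.e. `|V(G_A) ∩ V(G_B)|` where `B = Aᶜ`. -/
def sepOrder (A : Set G.E) : ℕ := (G.edgeVerts A ∩ G.edgeVerts Aᶜ).ncard

/-- One step along an edge belonging to the edge set `A`. -/
def stepOn (A : Set G.E) (a b : G.V) : Prop :=
  ∃ e ∈ A, (G.src e = a ∧ G.tgt e = b) ∨ (G.src e = b ∧ G.tgt e = a)

/-- Reachability using only edges in `A`. -/
def reachOn (A : Set G.E) : G.V → G.V → Prop := Relation.ReflTransGen (G.stepOn A)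

/-- Adjacency. -/
def Adj (a b : G.V) : Prop := G.stepOn Set.univ a b

/-- One adjacency step staying inside the vertex set `U`. -/
def stepWithin (U : Set G.V) (a b : G.V) : Prop := a ∈ U ∧ b ∈ U ∧ G.Adj a b

/-- The subgraph induced by the vertex set `U` is (nonempty and) connected. -/
def ConnectedWithin (U : Set G.V) : Prop :=
  U.Nonempty ∧ ∀ a ∈ U, ∀ b ∈ U, Relation.ReflTransGen (G.stepWithin U) a b

/-- Connectivity of the multigraph. -/
def Connected : Prop := G.ConnectedWithin Set.univ

/-- A multigraph is simple if it has no loops and no parallel edges. -/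
def Simple : Prop := (∀ e : G.E, G.src e ≠ G.tgt e) ∧ Function.Injective G.ends

/-- 3-connectivity: at least 4 vertices, and removing fewer than 3 vertices
leaves a connected graph. -/
def ThreeConnected : Prop :=
  4 ≤ Fintype.card G.V ∧ ∀ S : Set G.V, S.ncard < 3 → G.ConnectedWithin Sᶜ

/-- The spanning subgraph with edge set `T` is connected. -/
def ConnectedOn (T : Set G.E) : Prop := ∀ a b : G.V, G.reachOn T a b

/-- The degree of `v` in the spanning subgraph with edge set `T`
(loops count twice). -/
def degOn (T : Set G.E) (v : G.V) : ℕ :=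
  ({e ∈ T | G.src e = v}).ncard + ({e ∈ T | G.tgt e = v}).ncard

/-- The degree of a vertex (loops count twice). -/
def degree (v : G.V) : ℕ := G.degOn Set.univ v

/-- An edge set is a forest (contains no cycle) iff every nonempty subset
has a vertex of degree exactly one. -/
def IsForest (T : Set G.E) : Prop :=
  ∀ T' ⊆ T, T'.Nonempty → ∃ v : G.V, G.degOn T' v = 1

/-- `T` is the edge set of a spanning tree of `G`. -/
def IsSpanningTree (T : Set G.E) : Prop := G.IsForest T ∧ G.ConnectedOn T

/-- The rank of an edge set in the cycle matroid `M(G)`: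
the size of a largest forest contained in it. -/
def rk (A : Set G.E) : ℕ := sSup {n | ∃ T ⊆ A, G.IsForest T ∧ T.ncard = n}

/-- The order of the separation `(A, Aᶜ)` in the cycle matroid `M(G)`,
namely `r(A) + r(Aᶜ) - r(E) + 1`. -/
def msepOrder (A : Set G.E) : ℕ := G.rk A + G.rk Aᶜ + 1 - G.rk Set.univ

/-- The number of connected components of `G_A`, the subgraph induced by the
edge set `A`. -/
def ncompOn (A : Set G.E) : ℕ :=
  ({C : Set G.V | ∃ v ∈ G.edgeVerts A, C = {w | G.reachOn A v w}}).ncard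

/-- `G` has an edge ordering of width at most `k`: every prefix/suffix
separation has order at most `k`. -/
def WidthLE (k : ℕ) : Prop :=
  ∃ f : Fin (Fintype.card G.E) ≃ G.E,
    ∀ ℓ : ℕ,
      G.sepOrder {e | ∃ i : Fin (Fintype.card G.E), f i = e ∧ (i : ℕ) < ℓ} ≤ k

/-- The width of `G`: the minimum width of an edge ordering. -/
def width : ℕ := sInf {k | G.WidthLE k}

/-- The minor of `G` obtained by deleting the edges in `D` and contracting the
edges in `C`. -/
def minorDC (D C : Set G.E) : Multigraph :=
  let rel : G.V → G.V → Prop := fun a b => ∃ e ∈ C, G.src e = a ∧ G.tgt e = b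
  { V := Quot rel
    E := {e : G.E // e ∉ D ∪ C}
    fintypeV := @Fintype.ofFinite _ (Finite.of_surjective (Quot.mk rel) fun q => Quot.exists_rep q)
    fintypeE := Fintype.ofFinite _
    src := fun e => Quot.mk rel (G.src e.1)
    tgt := fun e => Quot.mk rel (G.tgt e.1) }

/-- Deletion of a vertex (together with all incident edges). -/
def deleteVertex (v : G.V) : Multigraph :=
  { V := {w : G.V // w ≠ v}
    E := {e : G.E // ¬ G.inc v e}
    fintypeV := Fintype.ofFinite _
    fintypeE := Fintype.ofFinite _
    src := fun e => ⟨G.src e.1, fun h => e.2 (Or.inl h.symm)⟩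
    tgt := fun e => ⟨G.tgt e.1, fun h => e.2 (Or.inr h.symm)⟩ }

/-- The edges having one endpoint in `X` and the other in `Y`. -/
def crossEdges (X Y : Set G.V) : Set G.E :=
  {e | (G.src e ∈ X ∧ G.tgt e ∈ Y) ∨ (G.src e ∈ Y ∧ G.tgt e ∈ X)}

/-- `G` has `R` as a minor, via branch sets. -/
def HasMinor (R : Multigraph) : Prop :=
  ∃ X : R.V → Set G.V,
    (∀ v : R.V, G.ConnectedWithin (X v)) ∧
    (Pairwise fun v w => Disjoint (X v) (X w)) ∧
    ∀ v w : R.V, v ≠ w →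
      ({f : R.E | R.ends f = s(v, w)}).ncard ≤ (G.crossEdges (X v) (X w)).ncard

/-- `D` is the edge set of a cycle of `G`. -/
def IsCycleSet (D : Set G.E) : Prop :=
  D.Nonempty ∧ (∀ v ∈ G.edgeVerts D, G.degOn D v = 2) ∧
    ∀ a ∈ G.edgeVerts D, ∀ b ∈ G.edgeVerts D, G.reachOn D a b

/-- The side `A` of a separation on `X` is rich: for every `x ∈ X` there is a
cycle `D` avoiding `x` with at most one edge outside `A`. -/
def Rich (A : Set G.E) (X : Set G.V) : Prop :=
  ∀ x ∈ X, ∃ D : Set G.E, G.IsCycleSet D ∧ x ∉ G.edgeVerts D ∧ (D \ A).ncard ≤ 1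

/-- The entry of the (edge × vertex) incidence matrix, as a polynomial. -/
def incCol (e : G.E) (v : G.V) : MvPolynomial G.E ℤ :=
  (if G.src e = v then 1 else 0) - (if G.tgt e = v then 1 else 0)

/-- The expanded Kirchhoff matrix `M_G` (with the column of `v0` deleted). -/
def bigMatrix (v0 : G.V) :
    Matrix (G.E ⊕ {v : G.V // v ≠ v0}) (G.E ⊕ {v : G.V // v ≠ v0}) (MvPolynomial G.E ℤ) :=
  Matrix.of fun r c =>
    match r, c with
    | Sum.inl e, Sum.inl f => if e = f then MvPolynomial.X e else 0
    | Sum.inl e, Sum.inr v => G.incCol e v.1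
    | Sum.inr v, Sum.inl e => - G.incCol e v.1
    | Sum.inr _, Sum.inr _ => 0

/-- The Dodgson polynomial `Ψ^{I,J}_K`: delete the rows indexed by `I` and the
columns indexed by `J` from `M_G`, take the determinant, and set `x_e = 0`
for `e ∈ K`.  (It is well defined up to an overall sign.) -/
def dodgson (v0 : G.V) (I J K : Set G.E) : MvPolynomial G.E ℤ :=
  if h : Nonempty ({e : G.E // e ∉ I} ≃ {e : G.E // e ∉ J}) then
    MvPolynomial.aeval (fun e => if e ∈ K then (0 : MvPolynomial G.E ℤ) else MvPolynomial.X e)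
      (Matrix.det (Matrix.of fun r c =>
        G.bigMatrix v0 (Sum.map Subtype.val id r) (Sum.map (fun x => (h.some x).1) id c)))
  else 0

/-- `(I,J,K)` is one of the 30 Dodgson configurations associated with the
5-configuration `S`. -/
def DodgsonConfig (S I J K : Set G.E) : Prop :=
  I ∪ J ∪ K = S ∧
    ((I.ncard = 2 ∧ J.ncard = 2 ∧ K.ncard = 1 ∧ I ∩ J = ∅ ∧ I ∩ K = ∅ ∧ J ∩ K = ∅) ∨
      (I.ncard = 3 ∧ J.ncard = 3 ∧ K = ∅ ∧ (I ∩ J).ncard = 1))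

/-- The 5-configuration `S` splits: one of its 30 associated Dodgson
polynomials is identically zero. -/
def ConfigSplits (S : Set G.E) : Prop :=
  ∃ I J K : Set G.E, G.DodgsonConfig S I J K ∧ ∀ v0 : G.V, G.dodgson v0 I J K = 0

/-- `G` is Feynman 5-split: every 5-configuration splits. -/
def FeynmanSplit : Prop := ∀ S : Set G.E, S.ncard = 5 → G.ConfigSplits S

/-- `(U, F)` is a subgraph of `G` (every edge of `F` has both ends in `U`). -/
def IsSubgraphPair (U : Set G.V) (F : Set G.E) : Prop :=
  ∀ e ∈ F, G.src e ∈ U ∧ G.tgt e ∈ U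

/-- `G` decomposes into edge-disjoint subgraphs `G₁ ∪ G₂ = G` with
`|V(G₁) ∩ V(G₂)| ≤ 2` and `|E(G₁) ∩ S| = 2`, or with
`|V(G₁) ∩ V(G₂)| = 1` and `|E(G₁) ∩ S| = 1`. -/
def splitWitness (S : Set G.E) : Prop :=
  ∃ (U1 U2 : Set G.V) (F1 F2 : Set G.E),
    G.IsSubgraphPair U1 F1 ∧ G.IsSubgraphPair U2 F2 ∧
    Disjoint F1 F2 ∧ U1 ∪ U2 = Set.univ ∧ F1 ∪ F2 = Set.univ ∧
    (((U1 ∩ U2).ncard ≤ 2 ∧ (F1 ∩ S).ncard = 2) ∨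
      ((U1 ∩ U2).ncard = 1 ∧ (F1 ∩ S).ncard = 1))

/-- A separation of order at most 1 with edges of `S` on both sides, or a
("bad") 2-separation with `min{|A ∩ S|, |B ∩ S|} = 2`. -/
def badSplitSep (S : Set G.E) : Prop :=
  ∃ A : Set G.E,
    (G.sepOrder A ≤ 1 ∧ (A ∩ S).Nonempty ∧ (Aᶜ ∩ S).Nonempty) ∨
      (G.sepOrder A = 2 ∧ min (A ∩ S).ncard (Aᶜ ∩ S).ncard = 2)

/-- Isomorphism of multigraphs. -/
def IsoTo (G' : Multigraph) : Prop :=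
  ∃ (α : G.V ≃ G'.V) (β : G.E ≃ G'.E),
    ∀ e : G.E, G'.ends (β e) = Sym2.map α (G.ends e)

/-- `G` is a tree. -/
def IsTree : Prop := G.Connected ∧ G.IsForest Set.univ

/-- Every vertex has degree 1 or 3. -/
def IsCubic : Prop := ∀ v : G.V, G.degree v = 1 ∨ G.degree v = 3

/-- A leaf. -/
def IsLeaf (v : G.V) : Prop := G.degree v = 1

/-- A cubic caterpillar: a cubic tree whose non-leaf vertices induce a path. -/
def IsCubicCaterpillar : Prop :=
  G.IsTree ∧ G.IsCubic ∧
    (∀ a ∈ {v : G.V | ¬ G.IsLeaf v}, ∀ b ∈ {v : G.V | ¬ G.IsLeaf v},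
      Relation.ReflTransGen (G.stepWithin {v : G.V | ¬ G.IsLeaf v}) a b) ∧
    ∀ v : G.V, ¬ G.IsLeaf v →
      ({e : G.E | G.inc v e ∧ ∃ w : G.V, ¬ G.IsLeaf w ∧ G.inc w e ∧ w ≠ v}).ncard ≤ 2

/-- The branch decomposition `(T, φ)` of the cycle matroid `M(G)` has width at
most `k`: removing any edge `f` of `T` gives a separation of the ground set
of matroid order at most `k`. -/
def branchWidthLE (T : Multigraph) (φ : G.E → T.V) (k : ℕ) : Prop :=
  ∀ f : T.E,
    G.msepOrder {e : G.E | φ e ∈ {x : T.V | T.reachOn {f}ᶜ (T.src f) x}} ≤ k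

/-- `(T, φ)` is a branch decomposition of `M(G)` over a cubic caterpillar. -/
def IsCatDecomp (T : Multigraph) (φ : G.E → T.V) : Prop :=
  T.IsCubicCaterpillar ∧ Function.Injective φ ∧ ∀ e : G.E, T.IsLeaf (φ e)

/-- The caterpillar width of the cycle matroid `M(G)`. -/
def catWidth : ℕ :=
  sInf {k | ∃ (T : Multigraph) (φ : G.E → T.V), G.IsCatDecomp T φ ∧ G.branchWidthLE T φ k}

end Multigraph

/-! ### Concrete graphs -/

/-- The complete graph `K₅`. -/
def K5m : Multigraph where
  V := Fin 5
  E := {p : Fin 5 × Fin 5 // p.1 < p.2}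
  src := fun e => e.1.1
  tgt := fun e => e.1.2

/-- The complete bipartite graph `K₃,₃`. -/
def K33m : Multigraph where
  V := Fin 3 ⊕ Fin 3
  E := Fin 3 × Fin 3
  src := fun e => Sum.inl e.1
  tgt := fun e => Sum.inr e.2

/-- The cube (3-dimensional hypercube) graph `C`. -/
def cubeM : Multigraph where
  V := Fin 2 × Fin 2 × Fin 2
  E := Fin 3 × Fin 2 × Fin 2
  src := fun e =>
    if e.1 = 0 then (0, e.2.1, e.2.2) else if e.1 = 1 then (e.2.1, 0, e.2.2)
      else (e.2.1, e.2.2, 0)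
  tgt := fun e =>
    if e.1 = 0 then (1, e.2.1, e.2.2) else if e.1 = 1 then (e.2.1, 1, e.2.2)
      else (e.2.1, e.2.2, 1)

/-- The octahedron graph `O = K₂,₂,₂`. -/
def octaM : Multigraph where
  V := Fin 3 × Fin 2
  E := {p : (Fin 3 × Fin 2) × (Fin 3 × Fin 2) // p.1.1 < p.2.1}
  src := fun e => e.1.1
  tgt := fun e => e.1.2

/-- The edges of the graph `H` (the cube after a Y–Δ transformation at one
vertex): vertices `0,1,2` form the new triangle, `6` is the antipodal vertex. -/
def hEdgeList : List (Fin 7 × Fin 7) :=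
  [(0,1), (0,2), (1,2), (0,3), (0,4), (1,3), (1,5), (2,4), (2,5), (3,6), (4,6), (5,6)]

/-- The graph `H`, one Δ–Y away from each of the cube and the octahedron. -/
def Hm : Multigraph where
  V := Fin 7
  E := {p : Fin 7 × Fin 7 // p ∈ hEdgeList}
  src := fun e => e.1.1
  tgt := fun e => e.1.2

/-- The complete graph `K₄`. -/
def K4m : Multigraph where
  V := Fin 4
  E := {p : Fin 4 × Fin 4 // p.1 < p.2}
  src := fun e => e.1.1
  tgt := fun e => e.1.2

/-- `K₅⁻`, the complete graph on 5 vertices minus the edge `{3,4}`. -/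
def K5minusM : Multigraph where
  V := Fin 5
  E := {p : Fin 5 × Fin 5 // p.1 < p.2 ∧ ¬(p.1 = 3 ∧ p.2 = 4)}
  src := fun e => e.1.1
  tgt := fun e => e.1.2

/-- The wheel `W_k`: centre `none`; rim edges `Sum.inl i` join `some i` to
`some (i+1)`, spoke edges `Sum.inr i` join the centre to `some i`. -/
def wheelM (k : ℕ) : Multigraph where
  V := Option (Fin k)
  E := Fin k ⊕ Fin k
  src := Sum.elim (fun i => some i) (fun _ => none)
  tgt := Sum.elim (fun i => some (finRotate k i)) (fun i => some i)

/-! ### Enhanced graphs -/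

/-- An enhanced graph: a graph together with sets of contract-proof and
delete-proof edges. -/
structure EGraph : Type 1 where
  G : Multigraph
  Cp : Set G.E
  Dp : Set G.E

namespace EGraph

/-- The 5-configuration `S` of an enhanced graph splits. -/
def Splits (H : EGraph) (S : Set H.G.E) : Prop :=
  H.G.badSplitSep S ∨
    (∃ f ∈ S \ H.Dp, (H.G.minorDC {f} ∅).badSplitSep {e | e.1 ∈ S}) ∨
    (∃ f ∈ S \ H.Cp, (H.G.minorDC ∅ {f}).badSplitSep {e | e.1 ∈ S})

/-- An enhanced graph is non-split if it has a non-split 5-configuration. -/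
def NonSplit (H : EGraph) : Prop := ∃ S : Set H.G.E, S.ncard = 5 ∧ ¬ H.Splits S

/-- Deletion of an edge. -/
def delE (H : EGraph) (f : H.G.E) : EGraph :=
  ⟨H.G.minorDC {f} ∅, {e | e.1 ∈ H.Cp}, {e | e.1 ∈ H.Dp}⟩

/-- Contraction of an edge. -/
def conE (H : EGraph) (f : H.G.E) : EGraph :=
  ⟨H.G.minorDC ∅ {f}, {e | e.1 ∈ H.Cp}, {e | e.1 ∈ H.Dp}⟩

/-- Deletion of a vertex. -/
def delV (H : EGraph) (v : H.G.V) : EGraph :=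
  ⟨H.G.deleteVertex v, {e | e.1 ∈ H.Cp}, {e | e.1 ∈ H.Dp}⟩

/-- Remove an edge from the contract-proof set. -/
def unprotC (H : EGraph) (f : H.G.E) : EGraph := ⟨H.G, H.Cp \ {f}, H.Dp⟩

/-- Remove an edge from the delete-proof set. -/
def unprotD (H : EGraph) (f : H.G.E) : EGraph := ⟨H.G, H.Cp, H.Dp \ {f}⟩

/-- Delete `f'` of a parallel pair `f, f'` and make `f` delete-proof. -/
def parallelReduce (H : EGraph) (f f' : H.G.E) : EGraph :=
  ⟨H.G.minorDC {f'} ∅, {e | e.1 ∈ H.Cp}, {e | e.1 ∈ H.Dp ∨ e.1 = f}⟩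

/-- Contract `f'` of the two edges `f, f'` at a degree-two vertex and make
`f` contract-proof. -/
def seriesReduce (H : EGraph) (f f' : H.G.E) : EGraph :=
  ⟨H.G.minorDC ∅ {f'}, {e | e.1 ∈ H.Cp ∨ e.1 = f}, {e | e.1 ∈ H.Dp}⟩

/-- One step of the enhanced-graph minor relation. -/
inductive MinorStep : EGraph → EGraph → Prop
  | delV (H : EGraph) (v : H.G.V) : MinorStep H (H.delV v)
  | delE (H : EGraph) (f : H.G.E) : MinorStep H (H.delE f)
  | conE (H : EGraph) (f : H.G.E) : MinorStep H (H.conE f)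
  | unprotC (H : EGraph) (f : H.G.E) (hf : f ∈ H.Cp) : MinorStep H (H.unprotC f)
  | unprotD (H : EGraph) (f : H.G.E) (hf : f ∈ H.Dp) : MinorStep H (H.unprotD f)
  | parallel (H : EGraph) (f f' : H.G.E) (hne : f ≠ f')
      (hpar : H.G.ends f = H.G.ends f') : MinorStep H (H.parallelReduce f f')
  | series (H : EGraph) (f f' : H.G.E) (v : H.G.V) (hne : f ≠ f')
      (hf : H.G.inc v f) (hf' : H.G.inc v f')
      (hdeg : ∀ e : H.G.E, H.G.inc v e → e = f ∨ e = f') :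
      MinorStep H (H.seriesReduce f f')

/-- Minor-minimal non-split enhanced graph: non-split, but every proper
enhanced minor is split. -/
def MinorMinimalNonSplit (H : EGraph) : Prop :=
  H.NonSplit ∧ ∀ H' : EGraph, Relation.TransGen MinorStep H H' → ¬ H'.NonSplit

/-- Isomorphism of enhanced graphs. -/
def IsoTo (H H' : EGraph) : Prop :=
  ∃ (α : H.G.V ≃ H'.G.V) (β : H.G.E ≃ H'.G.E),
    (∀ e : H.G.E, H'.G.ends (β e) = Sym2.map α (H.G.ends e)) ∧
    (∀ e : H.G.E, β e ∈ H'.Cp ↔ e ∈ H.Cp) ∧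
    (∀ e : H.G.E, β e ∈ H'.Dp ↔ e ∈ H.Dp)

end EGraph

/-- The edge `01` of `K₄`. -/
def e01K4 : K4m.E := ⟨(0, 1), by decide⟩

/-- The enhanced graph `K₄(1)`: all edges of `K₄` except one are both
contract-proof and delete-proof. -/
def K4one : EGraph := ⟨K4m, {e | e ≠ e01K4}, {e | e ≠ e01K4}⟩

/-! ### The statement -/

open Multigraph


/-! ### Auxiliary lemmas for Statement 14 -/

lemma stmt14_quotInj {α : Type*} {r : α → α → Prop} (hr : ∀ x y, r x y → x = y)
    {a b : α} (h : Quot.mk r a = Quot.mk r b) : a = b := by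
  have h2 := Quot.eq.mp h
  clear h
  induction h2 with
  | rel x y hxy => exact hr x y hxy
  | refl x => rfl
  | symm x y _ ih => exact ih.symm
  | trans x y z _ _ ih1 ih2 => exact ih1.trans ih2

lemma stmt14_helperBad (G : Multigraph) (S A : Set G.E) (hord : G.sepOrder A ≤ 2)
    (hAS : A ⊆ S) (hA1 : A.Nonempty) (hA2 : G.sepOrder A = 2 → A.ncard = 2)
    (hB2 : 2 ≤ (Aᶜ ∩ S).ncard) : G.badSplitSep S := by
  refine ⟨A, ?_⟩
  rw [Set.inter_eq_self_of_subset_left hAS]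
  rcases Nat.lt_or_ge (G.sepOrder A) 2 with hlt | hge
  · exact Or.inl ⟨Nat.lt_succ_iff.mp hlt, hA1, Set.nonempty_of_ncard_ne_zero (by omega)⟩
  · have h2 := le_antisymm hord hge
    exact Or.inr ⟨h2, by rw [hA2 h2]; exact min_eq_left hB2⟩

lemma stmt14_triBad (G : Multigraph) (S : Set G.E) (hS : S.ncard = 5)
    (e f g : G.E) (he : e ∈ S) (hf : f ∈ S) (hg : g ∈ S)
    (hef : e ≠ f) (heg : e ≠ g) (hfg : f ≠ g)
    (a b c : G.V)
    (hee : G.ends e = s(a, b)) (hfe : G.ends f = s(b, c))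
    (hge : G.ends g = s(a, c)) :
    (G.minorDC ∅ {e}).badSplitSep {e' | e'.1 ∈ S} := by
  classical
  set M := G.minorDC ∅ {e} with hM
  let rel : G.V → G.V → Prop :=
    fun x y => ∃ e' ∈ ({e} : Set G.E), G.src e' = x ∧ G.tgt e' = y
  let q : G.V → M.V := fun x => Quot.mk rel x
  have hfE : f ∉ (∅ ∪ {e} : Set G.E) := by
    simp only [Set.empty_union, Set.mem_singleton_iff]; exact hef.symm
  have hgE : g ∉ (∅ ∪ {e} : Set G.E) := by
    simp only [Set.empty_union, Set.mem_singleton_iff]; exact heg.symm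
  let fm : M.E := ⟨f, hfE⟩
  let gm : M.E := ⟨g, hgE⟩
  set A : Set M.E := {fm, gm} with hA
  -- q a = q b
  have hsound : q (G.src e) = q (G.tgt e) :=
    Quot.sound ⟨e, rfl, rfl, rfl⟩
  have hee' : s(G.src e, G.tgt e) = s(a, b) := hee
  have hqab : q a = q b := by
    rcases Sym2.eq_iff.mp hee' with ⟨h1, h2⟩ | ⟨h1, h2⟩
    · rw [← h1, ← h2]; exact hsound
    · rw [← h1, ← h2]; exact hsound.symm
  have hqba : q b = q a := hqab.symm
  have hf' : s(G.src f, G.tgt f) = s(b, c) := hfe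
  have hg' : s(G.src g, G.tgt g) = s(a, c) := hge
  have hfsrc : q (G.src f) = q a ∨ q (G.src f) = q c := by
    rcases Sym2.eq_iff.mp hf' with ⟨h1, _⟩ | ⟨h1, _⟩
    · rw [h1]; exact Or.inl hqba
    · rw [h1]; exact Or.inr rfl
  have hftgt : q (G.tgt f) = q a ∨ q (G.tgt f) = q c := by
    rcases Sym2.eq_iff.mp hf' with ⟨_, h2⟩ | ⟨_, h2⟩
    · rw [h2]; exact Or.inr rfl
    · rw [h2]; exact Or.inl hqba
  have hgsrc : q (G.src g) = q a ∨ q (G.src g) = q c := by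
    rcases Sym2.eq_iff.mp hg' with ⟨h1, _⟩ | ⟨h1, _⟩
    · rw [h1]; exact Or.inl rfl
    · rw [h1]; exact Or.inr rfl
  have hgtgt : q (G.tgt g) = q a ∨ q (G.tgt g) = q c := by
    rcases Sym2.eq_iff.mp hg' with ⟨_, h2⟩ | ⟨_, h2⟩
    · rw [h2]; exact Or.inr rfl
    · rw [h2]; exact Or.inl rfl
  have hsubV : M.edgeVerts A ⊆ {q a, q c} := by
    rintro w ⟨e', he', hinc⟩
    simp only [hA, Set.mem_insert_iff, Set.mem_singleton_iff] at he'
    simp only [Set.mem_insert_iff, Set.mem_singleton_iff]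
    rcases he' with rfl | rfl
    · rcases hinc with h1 | h1
      · rw [h1]; exact hfsrc
      · rw [h1]; exact hftgt
    · rcases hinc with h1 | h1
      · rw [h1]; exact hgsrc
      · rw [h1]; exact hgtgt
  have hord : M.sepOrder A ≤ 2 := by
    have hsub2 : M.edgeVerts A ∩ M.edgeVerts Aᶜ ⊆ {q a, q c} :=
      fun w hw => hsubV hw.1
    calc (M.edgeVerts A ∩ M.edgeVerts Aᶜ).ncard
        ≤ ({q a, q c} : Set M.V).ncard := Set.ncard_le_ncard hsub2 (Set.toFinite _)
      _ ≤ 2 := by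
          refine le_trans (Set.ncard_insert_le _ _) ?_
          simp [Set.ncard_singleton]
  have hAS : A ⊆ {e' : M.E | e'.1 ∈ S} := by
    intro e' he'
    simp only [hA, Set.mem_insert_iff, Set.mem_singleton_iff] at he'
    rcases he' with rfl | rfl
    · exact hf
    · exact hg
  have hA1 : A.Nonempty := ⟨fm, Or.inl rfl⟩
  have hfmgm : fm ≠ gm := fun hq => hfg (congrArg Subtype.val hq)
  have hA2 : A.ncard = 2 := Set.ncard_pair hfmgm
  -- the other two edges of S
  have hefgS : ({e, f, g} : Set G.E) ⊆ S := by
    intro x hx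
    rcases hx with rfl | rfl | rfl
    · exact he
    · exact hf
    · exact hg
  have hW : (S \ {e, f, g}).ncard = 2 := by
    rw [Set.ncard_diff hefgS (Set.toFinite _), hS,
      Set.ncard_eq_three.mpr ⟨e, f, g, hef, heg, hfg, rfl⟩]
  obtain ⟨x, y, hxW, hyW, hxy⟩ :=
    (Set.one_lt_ncard_iff (Set.toFinite (S \ {e, f, g}))).mp (by rw [hW]; norm_num)
  simp only [Set.mem_diff, Set.mem_insert_iff, Set.mem_singleton_iff, not_or] at hxW hyW
  obtain ⟨hxS, hxe, hxf, hxg⟩ := hxW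
  obtain ⟨hyS, hye, hyf, hyg⟩ := hyW
  let xm : M.E := ⟨x, by simp only [Set.empty_union, Set.mem_singleton_iff]; exact hxe⟩
  let ym : M.E := ⟨y, by simp only [Set.empty_union, Set.mem_singleton_iff]; exact hye⟩
  have hmemAc : ∀ (z : M.E), z.1 ≠ f → z.1 ≠ g → z ∈ Aᶜ := by
    intro z hzf hzg hzA
    simp only [hA, Set.mem_insert_iff, Set.mem_singleton_iff] at hzA
    rcases hzA with rfl | rfl
    · exact hzf rfl
    · exact hzg rfl
  have hpairsub : ({xm, ym} : Set M.E) ⊆ Aᶜ ∩ {e' : M.E | e'.1 ∈ S} := by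
    intro z hz
    rcases hz with rfl | rfl
    · exact ⟨hmemAc xm hxf hxg, hxS⟩
    · exact ⟨hmemAc ym hyf hyg, hyS⟩
  have hB2 : 2 ≤ (Aᶜ ∩ {e' : M.E | e'.1 ∈ S}).ncard := by
    calc 2 = ({xm, ym} : Set M.E).ncard :=
          (Set.ncard_pair (fun hq => hxy (congrArg Subtype.val hq))).symm
      _ ≤ _ := Set.ncard_le_ncard hpairsub (Set.toFinite _)
  exact stmt14_helperBad M {e' : M.E | e'.1 ∈ S} A hord hAS hA1 (fun _ => hA2) hB2

lemma stmt14_degBad (G : Multigraph) (S : Set G.E) (hS : S.ncard = 5)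
    (v : G.V) (hdeg : G.degree v = 3) (hsub : {e | G.inc v e} ⊆ S)
    (h : G.E) (hh : G.inc v h) :
    (G.minorDC {h} ∅).badSplitSep {e' | e'.1 ∈ S} := by
  classical
  set M := G.minorDC {h} ∅ with hM
  let rel : G.V → G.V → Prop :=
    fun x y => ∃ e' ∈ (∅ : Set G.E), G.src e' = x ∧ G.tgt e' = y
  have hrEmpty : ∀ x y, rel x y → x = y := by
    rintro x y ⟨e', he', -⟩
    exact absurd he' (Set.notMem_empty e')
  let q : G.V → M.V := fun x => Quot.mk rel x
  have qinj : ∀ {x y : G.V}, q x = q y → x = y := fun hxy => stmt14_quotInj hrEmpty hxy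
  set T : Set G.E := {e | G.inc v e} with hT
  have hhT : h ∈ T := hh
  have hdeg' : ({e | G.src e = v} : Set G.E).ncard + ({e | G.tgt e = v} : Set G.E).ncard = 3 := by
    have h0 := hdeg
    unfold Multigraph.degree Multigraph.degOn at h0
    simpa [Set.sep_univ] using h0
  have hTsub : T ⊆ {e | G.src e = v} ∪ {e | G.tgt e = v} := by
    intro k hk
    rcases hk with h1 | h1
    · exact Or.inl h1.symm
    · exact Or.inr h1.symm
  have hTcard : T.ncard ≤ 3 := by
    calc T.ncard ≤ ({e | G.src e = v} ∪ {e | G.tgt e = v} : Set G.E).ncard :=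
          Set.ncard_le_ncard hTsub (Set.toFinite _)
      _ ≤ _ := Set.ncard_union_le _ _
      _ = 3 := hdeg'
  set A : Set M.E := {e' : M.E | G.inc v e'.1} with hA
  -- order bound
  let φ : M.E → M.V := fun e' =>
    if q (G.src e'.1) = q v then q (G.tgt e'.1) else q (G.src e'.1)
  have hsub2 : M.edgeVerts A ∩ M.edgeVerts Aᶜ ⊆ φ '' A := by
    rintro w ⟨hw1, hw2⟩
    obtain ⟨e', he'A, hinc⟩ := hw1
    have hwv : w ≠ q v := by
      rintro rfl
      obtain ⟨e'', he''c, hinc''⟩ := hw2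
      apply he''c
      rcases hinc'' with h1 | h1
      · exact Or.inl (qinj h1)
      · exact Or.inr (qinj h1)
    refine ⟨e', he'A, ?_⟩
    rcases hinc with h1 | h1
    · have hcond : ¬ (q (G.src e'.1) = q v) := fun hc => hwv (h1.trans hc)
      simp only [φ, if_neg hcond]
      exact h1.symm
    · by_cases hc : q (G.src e'.1) = q v
      · simp only [φ, if_pos hc]
        exact h1.symm
      · exfalso
        rcases he'A with h2 | h2
        · exact hc (congrArg q h2).symm
        · exact hwv (h1.trans (congrArg q h2).symm)
  have hordA : M.sepOrder A ≤ A.ncard := by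
    calc (M.edgeVerts A ∩ M.edgeVerts Aᶜ).ncard
        ≤ (φ '' A).ncard := Set.ncard_le_ncard hsub2 (Set.toFinite _)
      _ ≤ A.ncard := Set.ncard_image_le (Set.toFinite _)
  have hvalsub : Subtype.val '' A ⊆ T \ {h} := by
    rintro x ⟨e', he'A, rfl⟩
    refine ⟨he'A, ?_⟩
    intro hxh
    exact e'.2 (Set.mem_union_left _ hxh)
  have hTh : (T \ {h}).ncard ≤ 2 := by
    rw [Set.ncard_diff_singleton_of_mem hhT]
    omega
  have hAle2 : A.ncard ≤ 2 := by
    calc A.ncard = (Subtype.val '' A).ncard :=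
          (Set.ncard_image_of_injective A Subtype.val_injective).symm
      _ ≤ (T \ {h}).ncard := Set.ncard_le_ncard hvalsub (Set.toFinite _)
      _ ≤ 2 := hTh
  have hord : M.sepOrder A ≤ 2 := le_trans hordA hAle2
  have hAS : A ⊆ {e' : M.E | e'.1 ∈ S} := fun e' he' => hsub he'
  -- nonemptiness of A
  have hex : ∃ k, k ∈ T ∧ k ≠ h := by
    by_contra hcon
    push_neg at hcon
    have h1 : ({e | G.src e = v} : Set G.E) ⊆ {h} :=
      fun k hk => hcon k (Or.inl hk.symm)
    have h2 : ({e | G.tgt e = v} : Set G.E) ⊆ {h} :=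
      fun k hk => hcon k (Or.inr hk.symm)
    have c1 := Set.ncard_le_ncard h1 (Set.finite_singleton h)
    have c2 := Set.ncard_le_ncard h2 (Set.finite_singleton h)
    rw [Set.ncard_singleton] at c1 c2
    omega
  obtain ⟨k, hkT, hkh⟩ := hex
  have hkE : k ∉ ({h} ∪ ∅ : Set G.E) := by
    simp only [Set.union_empty, Set.mem_singleton_iff]; exact hkh
  have hA1 : A.Nonempty := ⟨⟨k, hkE⟩, hkT⟩
  have hA2 : M.sepOrder A = 2 → A.ncard = 2 := fun h2 => le_antisymm hAle2 (h2 ▸ hordA)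
  -- the other side
  have hWcard : 2 ≤ (S \ T).ncard := by
    rw [Set.ncard_diff hsub (Set.toFinite _), hS]
    omega
  obtain ⟨x, y, hxW, hyW, hxy⟩ :=
    (Set.one_lt_ncard_iff (Set.toFinite (S \ T))).mp (by omega)
  obtain ⟨hxS, hxT⟩ := hxW
  obtain ⟨hyS, hyT⟩ := hyW
  have hxh : x ≠ h := fun hxh => hxT (hxh ▸ hhT)
  have hyh : y ≠ h := fun hyh => hyT (hyh ▸ hhT)
  let xm : M.E := ⟨x, by simp only [Set.union_empty, Set.mem_singleton_iff]; exact hxh⟩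
  let ym : M.E := ⟨y, by simp only [Set.union_empty, Set.mem_singleton_iff]; exact hyh⟩
  have hpairsub : ({xm, ym} : Set M.E) ⊆ Aᶜ ∩ {e' : M.E | e'.1 ∈ S} := by
    intro z hz
    rcases hz with rfl | rfl
    · exact ⟨fun hzA => hxT hzA, hxS⟩
    · exact ⟨fun hzA => hyT hzA, hyS⟩
  have hB2 : 2 ≤ (Aᶜ ∩ {e' : M.E | e'.1 ∈ S}).ncard := by
    calc 2 = ({xm, ym} : Set M.E).ncard :=
          (Set.ncard_pair (fun hq => hxy (congrArg Subtype.val hq))).symm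
      _ ≤ _ := Set.ncard_le_ncard hpairsub (Set.toFinite _)
  exact stmt14_helperBad M {e' : M.E | e'.1 ∈ S} A hord hAS hA1 hA2 hB2

lemma stmt14_triCp (H : EGraph) (S : Set H.G.E) (hS : S.ncard = 5) (hns : ¬ H.Splits S)
    (e f g : H.G.E) (he : e ∈ S) (hf : f ∈ S) (hg : g ∈ S)
    (hef : e ≠ f) (heg : e ≠ g) (hfg : f ≠ g)
    (a b c : H.G.V)
    (hee : H.G.ends e = s(a, b)) (hfe : H.G.ends f = s(b, c))
    (hge : H.G.ends g = s(a, c)) : e ∈ H.Cp := by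
  by_contra heCp
  exact hns (Or.inr (Or.inr ⟨e, ⟨he, heCp⟩,
    stmt14_triBad H.G S hS e f g he hf hg hef heg hfg a b c hee hfe hge⟩))

theorem stmt14 (H : EGraph) (S : Set H.G.E) (hS : S.ncard = 5) (hns : ¬ H.Splits S) :
    (∀ e ∈ S, ∀ f ∈ S, ∀ g ∈ S, e ≠ f → e ≠ g → f ≠ g →
      (∃ a b c : H.G.V, a ≠ b ∧ a ≠ c ∧ b ≠ c ∧
        H.G.ends e = s(a, b) ∧ H.G.ends f = s(b, c) ∧ H.G.ends g = s(a, c)) →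
      (e ∈ H.Cp ∧ f ∈ H.Cp ∧ g ∈ H.Cp)) ∧
    (∀ v : H.G.V, H.G.degree v = 3 → {e | H.G.inc v e} ⊆ S →
      {e | H.G.inc v e} ⊆ H.Dp) := by
  constructor
  · rintro e he f hf g hg hef heg hfg ⟨a, b, c, hab, hac, hbc, hee, hfe, hge⟩
    refine ⟨?_, ?_, ?_⟩
    · exact stmt14_triCp H S hS hns e f g he hf hg hef heg hfg a b c hee hfe hge
    · exact stmt14_triCp H S hS hns f g e hf hg he hfg hef.symm heg.symm b c a
        hfe (hge.trans Sym2.eq_swap) (hee.trans Sym2.eq_swap)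
    · exact stmt14_triCp H S hS hns g f e hg hf he hfg.symm heg.symm hef.symm a c b
        hge (hfe.trans Sym2.eq_swap) hee
  · intro v hv hsubT h hh
    by_contra hD
    exact hns (Or.inr (Or.inl ⟨h, ⟨hsubT hh, hD⟩,
      stmt14_degBad H.G S hS v hv hsubT h hh⟩))
end
end

section
/- Up to isomorphism, the unique minor-minimal non-split enhanced graph whose underlying graph is K_4 is the enhanced graph K_4(1) in which five of the six edges of K_4 are both contract-proof and delete-proof and the sixth edge is neither; its non-split 5-configuration consists of these five doubly protected edges. -/
/-!  Common definitions: multigraphs, separations, width, minors,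
Kirchhoff/Dodgson polynomials, Feynman 5-splitting, enhanced graphs. -/

noncomputable section

attribute [local instance] Classical.propDecidable

/-! ### Auxiliary machinery for the proof -/

section AuxMachinery

namespace Multigraph

lemma inc_iff_mem_ends {G : Multigraph} (v : G.V) (e : G.E) : G.inc v e ↔ v ∈ G.ends e := by
  simp [Multigraph.inc, Multigraph.ends, Sym2.mem_iff]

variable {G G' : Multigraph}

/-- A (strong) isomorphism datum between multigraphs. -/
def IsIso (α : G.V ≃ G'.V) (β : G.E ≃ G'.E) : Prop :=
  ∀ e : G.E, G'.ends (β e) = Sym2.map α (G.ends e)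

namespace IsIso

variable {α : G.V ≃ G'.V} {β : G.E ≃ G'.E}

lemma symm (h : IsIso α β) : IsIso α.symm β.symm := by
  intro e
  have h1 := h (β.symm e)
  rw [β.apply_symm_apply] at h1
  rw [h1, Sym2.map_map]
  have : (⇑α.symm ∘ ⇑α) = id := by funext x; simp
  rw [this, Sym2.map_id, id_eq]

lemma inc (h : IsIso α β) {v : G.V} {e : G.E} : G'.inc (α v) (β e) ↔ G.inc v e := by
  rw [inc_iff_mem_ends, inc_iff_mem_ends, h e]
  constructor
  · rintro hm
    rw [Sym2.mem_map] at hm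
    obtain ⟨a, ha, haa⟩ := hm
    rwa [← α.injective haa]
  · intro hv
    rw [Sym2.mem_map]
    exact ⟨v, hv, rfl⟩

lemma edgeVerts_image (h : IsIso α β) (A : Set G.E) :
    G'.edgeVerts (β '' A) = α '' G.edgeVerts A := by
  ext v'
  constructor
  · rintro ⟨e', ⟨e, heA, rfl⟩, hinc⟩
    refine ⟨α.symm v', ⟨e, heA, ?_⟩, α.apply_symm_apply v'⟩
    have h2 : G'.inc (α (α.symm v')) (β e) := by rwa [α.apply_symm_apply]
    exact h.inc.mp h2
  · rintro ⟨v, ⟨e, heA, hinc⟩, rfl⟩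
    exact ⟨β e, ⟨e, heA, rfl⟩, h.inc.mpr hinc⟩

lemma sepOrder_image (h : IsIso α β) (A : Set G.E) :
    G'.sepOrder (β '' A) = G.sepOrder A := by
  unfold sepOrder
  rw [← Set.image_compl_eq β.bijective, h.edgeVerts_image, h.edgeVerts_image,
    ← Set.image_inter α.injective, Set.ncard_image_of_injective _ α.injective]

lemma badSplitSep_image (h : IsIso α β) {S : Set G.E} (hb : G.badSplitSep S) :
    G'.badSplitSep (β '' S) := by
  obtain ⟨A, hA⟩ := hb
  refine ⟨β '' A, ?_⟩
  have hc : (β '' A)ᶜ = β '' Aᶜ := by rw [Set.image_compl_eq β.bijective]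
  have hi1 : β '' A ∩ β '' S = β '' (A ∩ S) := (Set.image_inter β.injective).symm
  have hi2 : β '' Aᶜ ∩ β '' S = β '' (Aᶜ ∩ S) := (Set.image_inter β.injective).symm
  rcases hA with ⟨h1, h2, h3⟩ | ⟨h1, h2⟩
  · refine Or.inl ⟨by rwa [h.sepOrder_image], ?_, ?_⟩
    · rw [hi1]; exact h2.image β
    · rw [hc, hi2]; exact h3.image β
  · refine Or.inr ⟨by rwa [h.sepOrder_image], ?_⟩
    rw [hi1, hc, hi2, Set.ncard_image_of_injective _ β.injective,
      Set.ncard_image_of_injective _ β.injective]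
    exact h2

end IsIso

/-- The contraction relation used in `minorDC`. -/
def mrel (G : Multigraph) (C : Set G.E) : G.V → G.V → Prop :=
  fun a b => ∃ e ∈ C, G.src e = a ∧ G.tgt e = b

lemma minorDC_V (D C : Set G.E) : (G.minorDC D C).V = Quot (G.mrel C) := rfl

lemma minorDC_src (D C : Set G.E) (x : (G.minorDC D C).E) :
    (G.minorDC D C).src x = Quot.mk (G.mrel C) (G.src x.1) := rfl

lemma minorDC_tgt (D C : Set G.E) (x : (G.minorDC D C).E) :
    (G.minorDC D C).tgt x = Quot.mk (G.mrel C) (G.tgt x.1) := rfl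

/-- Transfer of an isomorphism to minors. -/
lemma IsIso.minorDC {α : G.V ≃ G'.V} {β : G.E ≃ G'.E} (h : IsIso α β) (D C : Set G.E) :
    ∃ (α' : (G.minorDC D C).V ≃ (G'.minorDC (β '' D) (β '' C)).V)
      (β' : (G.minorDC D C).E ≃ (G'.minorDC (β '' D) (β '' C)).E),
      IsIso α' β' ∧ (∀ x, (β' x).1 = β x.1) := by
  classical
  have hsym2 : ∀ e : G.E, (G'.src (β e) = α (G.src e) ∧ G'.tgt (β e) = α (G.tgt e)) ∨
      (G'.src (β e) = α (G.tgt e) ∧ G'.tgt (β e) = α (G.src e)) := by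
    intro e
    have h1 := h e
    unfold ends at h1
    rw [Sym2.map_pair_eq, Sym2.eq_iff] at h1
    tauto
  -- vertex map
  have hfwd : ∀ a b : G.V, G.mrel C a b →
      Quot.mk (G'.mrel (β '' C)) (α a) = Quot.mk (G'.mrel (β '' C)) (α b) := by
    rintro a b ⟨e, heC, hs, ht⟩
    rcases hsym2 e with ⟨h1, h2⟩ | ⟨h1, h2⟩
    · exact Quot.sound ⟨β e, ⟨e, heC, rfl⟩, by rw [h1, hs], by rw [h2, ht]⟩
    · exact (Quot.sound ⟨β e, ⟨e, heC, rfl⟩, by rw [h1, ht], by rw [h2, hs]⟩).symm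
  have hbwd : ∀ a b : G'.V, G'.mrel (β '' C) a b →
      Quot.mk (G.mrel C) (α.symm a) = Quot.mk (G.mrel C) (α.symm b) := by
    rintro a b ⟨e', ⟨e, heC, rfl⟩, hs, ht⟩
    rcases hsym2 e with ⟨h1, h2⟩ | ⟨h1, h2⟩
    · refine Quot.sound ⟨e, heC, ?_, ?_⟩
      · rw [← hs, h1, α.symm_apply_apply]
      · rw [← ht, h2, α.symm_apply_apply]
    · refine (Quot.sound ⟨e, heC, ?_, ?_⟩).symm
      · rw [← ht, h2, α.symm_apply_apply]
      · rw [← hs, h1, α.symm_apply_apply]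
  let α' : (G.minorDC D C).V ≃ (G'.minorDC (β '' D) (β '' C)).V :=
    { toFun := Quot.lift (fun v => Quot.mk (G'.mrel (β '' C)) (α v)) hfwd
      invFun := Quot.lift (fun v => Quot.mk (G.mrel C) (α.symm v)) hbwd
      left_inv := by
        intro q
        induction q using Quot.ind with
        | _ v => exact congrArg (Quot.mk (G.mrel C)) (α.symm_apply_apply v)
      right_inv := by
        intro q
        induction q using Quot.ind with
        | _ v => exact congrArg (Quot.mk (G'.mrel (β '' C))) (α.apply_symm_apply v) }
  have hmemiff : ∀ e : G.E, e ∈ D ∪ C ↔ β e ∈ β '' D ∪ β '' C := by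
    intro e
    rw [Set.mem_union, Set.mem_union, β.injective.mem_set_image, β.injective.mem_set_image]
  let β' : (G.minorDC D C).E ≃ (G'.minorDC (β '' D) (β '' C)).E :=
    Equiv.subtypeEquiv β (fun e => not_congr (hmemiff e))
  refine ⟨α', β', ?_, fun x => rfl⟩
  intro x
  show Sym2.mk _ _ = Sym2.map _ (Sym2.mk _ _)
  rw [Sym2.map_pair_eq]
  rw [minorDC_src, minorDC_tgt, minorDC_src, minorDC_tgt]
  have hval : (β' x).1 = β x.1 := rfl
  rw [hval]
  rcases hsym2 x.1 with ⟨h1, h2⟩ | ⟨h1, h2⟩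
  · rw [h1, h2]; rfl
  · rw [h1, h2]
    rw [Sym2.eq_swap]
    rfl

end Multigraph

end AuxMachinery


section AuxFive

namespace Multigraph

variable {G : Multigraph}

lemma sepOrder_le_of_subset {A : Set G.E} {W : Set G.V}
    (h : G.edgeVerts A ∩ G.edgeVerts Aᶜ ⊆ W) (hW : W.Finite) :
    G.sepOrder A ≤ W.ncard :=
  Set.ncard_le_ncard h hW

lemma ncard_compl_eq (A : Set G.E) (n : ℕ) (h5 : Fintype.card G.E = n) :
    A.ncard + Aᶜ.ncard = n := by
  classical
  rw [Set.ncard_add_ncard_compl A (Set.toFinite A) (Set.toFinite _), Nat.card_eq_fintype_card, h5]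

/-- Every multigraph with exactly five edges has a bad separation for the full
configuration. -/
theorem badSplitSep_univ_of_five (G : Multigraph) (h5 : Fintype.card G.E = 5) :
    G.badSplitSep Set.univ := by
  classical
  by_cases hc : ∃ A : Set G.E, A.Nonempty ∧ Aᶜ.Nonempty ∧ G.sepOrder A ≤ 1
  · obtain ⟨A, h1, h2, h3⟩ := hc
    exact ⟨A, Or.inl ⟨h3, by simpa using h1, by simpa using h2⟩⟩
  push_neg at hc
  have hord : ∀ A : Set G.E, A.Nonempty → Aᶜ.Nonempty → 2 ≤ G.sepOrder A := by
    intro A h1 h2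
    have := hc A h1 h2
    omega
  have hcompl := fun A : Set G.E => ncard_compl_eq A 5 h5
  have hne_of_ncard : ∀ (A : Set G.E) (n : ℕ), A.ncard = n → 0 < n → A.Nonempty := by
    intro A n hA hn
    exact Set.nonempty_of_ncard_ne_zero (by omega)
  -- no loops
  have hloop : ∀ e : G.E, G.src e ≠ G.tgt e := by
    intro e he
    have hA : ({e} : Set G.E).ncard = 1 := Set.ncard_singleton e
    have hAc : ({e} : Set G.E)ᶜ.ncard = 4 := by have := hcompl {e}; omega
    have h2 := hord {e} ⟨e, rfl⟩ (hne_of_ncard _ 4 hAc (by omega))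
    have hsub : G.edgeVerts {e} ∩ G.edgeVerts {e}ᶜ ⊆ {G.src e} := by
      rintro v ⟨⟨f, hf, hinc⟩, -⟩
      rcases hf with rfl
      rcases hinc with h | h
      · exact h
      · rw [← he] at h; exact h
    have := sepOrder_le_of_subset hsub (Set.finite_singleton _)
    rw [Set.ncard_singleton] at this
    omega
  -- every endpoint of an edge is hit by another edge
  have hdeg2 : ∀ (e : G.E) (v : G.V), G.inc v e → ∃ f, f ≠ e ∧ G.inc v f := by
    intro e v hv
    by_contra hno
    push_neg at hno
    have hAc : ({e} : Set G.E)ᶜ.ncard = 4 := by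
      have := hcompl {e}; have := Set.ncard_singleton (a := e); omega
    have h2 := hord {e} ⟨e, rfl⟩ (hne_of_ncard _ 4 hAc (by omega))
    -- the other endpoint of e
    obtain ⟨w, hw⟩ : ∃ w, ∀ u, G.inc u e → u = v ∨ u = w := by
      rcases hv with hs | ht
      · exact ⟨G.tgt e, fun u hu => Or.imp (fun h => h.trans hs.symm) id hu⟩
      · exact ⟨G.src e, fun u hu => Or.symm (Or.imp id (fun h => h.trans ht.symm) hu)⟩
    have hsub : G.edgeVerts {e} ∩ G.edgeVerts {e}ᶜ ⊆ {w} := by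
      rintro u ⟨⟨f, hf, hincf⟩, ⟨g, hg, hincg⟩⟩
      rcases hf with rfl
      rcases hw u hincf with rfl | rfl
      · exfalso
        exact hno g (fun hge => hg (by simpa using hge)) hincg
      · rfl
    have := sepOrder_le_of_subset hsub (Set.finite_singleton _)
    rw [Set.ncard_singleton] at this
    omega
  -- generic 2-edge separation helper
  have hpairsep : ∀ (e f : G.E) (W : Set G.V), e ≠ f →
      G.edgeVerts {e, f} ∩ G.edgeVerts {e, f}ᶜ ⊆ W → W.Finite → W.ncard ≤ 2 →
      G.badSplitSep Set.univ := by
    intro e f W hef hsub hWfin hW2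
    have hA2 : ({e, f} : Set G.E).ncard = 2 := Set.ncard_pair hef
    have hAc : ({e, f} : Set G.E)ᶜ.ncard = 3 := by have := hcompl {e, f}; omega
    have hge := hord {e, f} ⟨e, by simp⟩ (hne_of_ncard _ 3 hAc (by omega))
    have hle : G.sepOrder {e, f} ≤ 2 := le_trans (sepOrder_le_of_subset hsub hWfin) hW2
    refine ⟨{e, f}, Or.inr ⟨le_antisymm hle hge, ?_⟩⟩
    rw [Set.inter_univ, Set.inter_univ, hA2, hAc]
    omega
  -- parallel edges
  by_cases hpar : ∃ e f : G.E, e ≠ f ∧ G.ends e = G.ends f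
  · obtain ⟨e, f, hef, hends⟩ := hpar
    refine hpairsep e f {G.src e, G.tgt e} hef ?_ (Set.toFinite _) ?_
    · rintro v ⟨⟨g, hg, hinc⟩, -⟩
      rcases hg with rfl | hg
      · rcases hinc with h | h
        · exact Or.inl h
        · exact Or.inr h
      · rcases hg with rfl
        rw [inc_iff_mem_ends, ← hends, ← inc_iff_mem_ends] at hinc
        rcases hinc with h | h
        · exact Or.inl h
        · exact Or.inr h
    · exact le_trans (Set.ncard_insert_le _ _) (by rw [Set.ncard_singleton])
  push_neg at hpar
  -- counting: find a vertex of degree two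
  have hcard5 : (Finset.univ : Finset G.E).card = 5 := by
    rw [Finset.card_univ, h5]
  let deg : G.V → ℕ := fun v => (Finset.univ.filter (fun e => G.inc v e)).card
  have hdegsum : ∑ v, deg v = 10 := by
    have h1 : ∀ v, deg v = ∑ e : G.E, if G.inc v e then 1 else 0 := by
      intro v
      show (Finset.univ.filter (fun e => G.inc v e)).card = _
      rw [Finset.card_filter]
    calc ∑ v, deg v = ∑ v : G.V, ∑ e : G.E, if G.inc v e then 1 else 0 := by
          exact Finset.sum_congr rfl (fun v _ => h1 v)
      _ = ∑ e : G.E, ∑ v : G.V, if G.inc v e then 1 else 0 := Finset.sum_comm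
      _ = ∑ _e : G.E, 2 := by
          refine Finset.sum_congr rfl (fun e _ => ?_)
          rw [← Finset.card_filter]
          have : Finset.univ.filter (fun v => G.inc v e) = {G.src e, G.tgt e} := by
            ext v
            simp only [Finset.mem_filter, Finset.mem_univ, true_and, Finset.mem_insert,
              Finset.mem_singleton]
            exact Iff.rfl
          rw [this, Finset.card_insert_of_notMem (by simp [hloop e]), Finset.card_singleton]
      _ = 10 := by rw [Finset.sum_const, hcard5]; rfl
  have hW2' : ∀ v e, G.inc v e → 2 ≤ deg v := by
    intro v e hv
    obtain ⟨f, hfe, hf⟩ := hdeg2 e v hv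
    have : ({e, f} : Finset G.E) ⊆ Finset.univ.filter (fun g => G.inc v g) := by
      intro g hg
      simp only [Finset.mem_insert, Finset.mem_singleton] at hg
      rcases hg with rfl | rfl <;> simp [hv, hf]
    calc 2 = ({e, f} : Finset G.E).card := by
          rw [Finset.card_insert_of_notMem (by simp [Ne.symm hfe]), Finset.card_singleton]
      _ ≤ _ := Finset.card_le_card this
  have hexists : ∃ v e, G.inc v e ∧ deg v = 2 := by
    by_contra hno
    push_neg at hno
    have hW3 : ∀ v e, G.inc v e → 3 ≤ deg v := by
      intro v e hv
      have := hW2' v e hv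
      have := hno v e hv
      omega
    set W := Finset.univ.filter (fun v => ∃ e, G.inc v e) with hWdef
    have hsumW : ∑ v ∈ W, deg v = 10 := by
      rw [← hdegsum]
      refine Finset.sum_subset (Finset.subset_univ W) ?_
      intro v _ hv
      rw [hWdef] at hv
      simp only [Finset.mem_filter, Finset.mem_univ, true_and, not_exists] at hv
      simp [deg, Finset.filter_eq_empty_iff.mpr (fun e _ => hv e)]
    have hsumge : 3 * W.card ≤ 10 := by
      rw [← hsumW]
      calc 3 * W.card = W.card * 3 := by ring
        _ = ∑ _v ∈ W, 3 := by rw [Finset.sum_const]; rfl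
        _ ≤ ∑ v ∈ W, deg v := by
            refine Finset.sum_le_sum ?_
            intro v hv
            rw [hWdef] at hv
            simp only [Finset.mem_filter, Finset.mem_univ, true_and] at hv
            obtain ⟨e, he⟩ := hv
            exact hW3 v e he
    have hWle : W.card ≤ 3 := by omega
    -- edges inject into 2-subsets of W
    let em : G.E → Finset G.V := fun e => {G.src e, G.tgt e}
    have hmem : ∀ e ∈ (Finset.univ : Finset G.E), em e ∈ W.powersetCard 2 := by
      intro e _
      rw [Finset.mem_powersetCard]
      constructor
      · intro v hv
        simp only [em, Finset.mem_insert, Finset.mem_singleton] at hv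
        rw [hWdef]
        simp only [Finset.mem_filter, Finset.mem_univ, true_and]
        rcases hv with rfl | rfl
        · exact ⟨e, Or.inl rfl⟩
        · exact ⟨e, Or.inr rfl⟩
      · rw [Finset.card_insert_of_notMem (by simp [hloop e]), Finset.card_singleton]
    have hinj : ∀ e ∈ (Finset.univ : Finset G.E), ∀ f ∈ (Finset.univ : Finset G.E),
        em e = em f → e = f := by
      intro e _ f _ hem
      by_contra hef
      refine hpar e f hef ?_
      have hse : G.src f ∈ em e := by rw [hem]; simp [em]
      have hte : G.tgt f ∈ em e := by rw [hem]; simp [em]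
      simp only [em, Finset.mem_insert, Finset.mem_singleton] at hse hte
      unfold ends
      rw [Sym2.eq_iff]
      rcases hse with h1 | h1 <;> rcases hte with h2 | h2
      · exact absurd (h1.trans h2.symm) (hloop f)
      · exact Or.inl ⟨h1.symm, h2.symm⟩
      · exact Or.inr ⟨h2.symm, h1.symm⟩
      · exact absurd (h1.trans h2.symm) (hloop f)
    have hcardle : (Finset.univ : Finset G.E).card ≤ (W.powersetCard 2).card :=
      Finset.card_le_card_of_injOn em (fun e he => hmem e he) (fun e he f hf => hinj e he f hf)
    rw [hcard5, Finset.card_powersetCard] at hcardle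
    have : W.card.choose 2 ≤ Nat.choose 3 2 := Nat.choose_le_choose 2 hWle
    have h32 : Nat.choose 3 2 = 3 := by decide
    omega
  obtain ⟨v, e0, hinc0, hdegv⟩ := hexists
  obtain ⟨e, f, hef, hfilter⟩ := Finset.card_eq_two.mp hdegv
  have hince : G.inc v e := by
    have : e ∈ Finset.univ.filter (fun g => G.inc v g) := by rw [hfilter]; simp
    simpa using this
  have hincf : G.inc v f := by
    have : f ∈ Finset.univ.filter (fun g => G.inc v g) := by rw [hfilter]; simp
    simpa using this
  have hother : ∀ g : G.E, G.inc v g → ∃ w, ∀ u, G.inc u g → u = v ∨ u = w := by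
    intro g hg
    rcases hg with hs | ht
    · exact ⟨G.tgt g, fun u hu => Or.imp (fun h => h.trans hs.symm) id hu⟩
    · exact ⟨G.src g, fun u hu => Or.symm (Or.imp id (fun h => h.trans ht.symm) hu)⟩
  obtain ⟨we, hwe⟩ := hother e hince
  obtain ⟨wf, hwf⟩ := hother f hincf
  refine hpairsep e f {we, wf} hef ?_ (Set.toFinite _) ?_
  · rintro u ⟨⟨g, hg, hincg⟩, ⟨g', hg', hincg'⟩⟩
    have huvw : u = v ∨ u = we ∨ u = wf := by
      rcases hg with rfl | hg
      · rcases hwe u hincg with h | h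
        · exact Or.inl h
        · exact Or.inr (Or.inl h)
      · rcases hg with rfl
        rcases hwf u hincg with h | h
        · exact Or.inl h
        · exact Or.inr (Or.inr h)
    rcases huvw with rfl | h
    · exfalso
      apply hg'
      have : g' ∈ Finset.univ.filter (fun g : G.E => G.inc u g) := by simp [hincg']
      rw [hfilter] at this
      simp only [Finset.mem_insert, Finset.mem_singleton] at this
      rcases this with rfl | rfl
      · exact Or.inl rfl
      · exact Or.inr rfl
    · exact h
  · exact le_trans (Set.ncard_insert_le _ _) (by rw [Set.ncard_singleton])

theorem not_nonSplit_of_card_le_five (H : EGraph) (h : Fintype.card H.G.E ≤ 5) :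
    ¬ H.NonSplit := by
  rintro ⟨S, h5, hns⟩
  have hSfin : S.Finite := Set.toFinite S
  by_cases hlt : Fintype.card H.G.E < 5
  · have hle : S.ncard ≤ (Set.univ : Set H.G.E).ncard :=
      Set.ncard_le_ncard (Set.subset_univ S) (Set.toFinite _)
    rw [Set.ncard_univ, Nat.card_eq_fintype_card] at hle
    omega
  · have hc5 : Fintype.card H.G.E = 5 := by omega
    have hSuniv : S = Set.univ := by
      apply Set.eq_of_subset_of_ncard_le (Set.subset_univ S)
      rw [Set.ncard_univ, Nat.card_eq_fintype_card, hc5, h5]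
    apply hns
    exact Or.inl (hSuniv ▸ Multigraph.badSplitSep_univ_of_five H.G hc5)

end Multigraph

end AuxFive

section AuxK4Concrete

attribute [-instance] Classical.propDecidable

instance instDecEqK4E : DecidableEq K4m.E :=
  show DecidableEq {p : Fin 4 × Fin 4 // p.1 < p.2} from inferInstance

instance instDecEqK4V : DecidableEq K4m.V :=
  show DecidableEq (Fin 4) from inferInstance

instance instFintypeK4E' : Fintype K4m.E :=
  show Fintype {p : Fin 4 × Fin 4 // p.1 < p.2} from inferInstance

instance instDecIncK4 (v : K4m.V) (e : K4m.E) : Decidable (K4m.inc v e) :=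
  inferInstanceAs (Decidable (v = K4m.src e ∨ v = K4m.tgt e))

instance instDecIsIsoK4 (α : K4m.V ≃ K4m.V) (β : K4m.E ≃ K4m.E) :
    Decidable (Multigraph.IsIso α β) :=
  inferInstanceAs (Decidable (∀ e : K4m.E, K4m.ends (β e) = Sym2.map α (K4m.ends e)))

/-- The six edges of `K₄`. -/
def k02 : K4m.E := ⟨(0, 2), by decide⟩
def k03 : K4m.E := ⟨(0, 3), by decide⟩
def k12 : K4m.E := ⟨(1, 2), by decide⟩
def k13 : K4m.E := ⟨(1, 3), by decide⟩
def k23 : K4m.E := ⟨(2, 3), by decide⟩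

lemma k4_edge_cases : ∀ e : K4m.E,
    e = e01K4 ∨ e = k02 ∨ e = k03 ∨ e = k12 ∨ e = k13 ∨ e = k23 := by decide

lemma k4_card : Fintype.card K4m.E = 6 := by decide

lemma k4_card_ne : Fintype.card {e : K4m.E // e ≠ e01K4} = 5 := by decide

lemma k4_ends_inj : ∀ e f : K4m.E, K4m.ends e = K4m.ends f → e = f := by decide

lemma k4_inc_exists : ∀ v : K4m.V, ∃ e : K4m.E, K4m.inc v e := by decide

lemma k4_three_edges : ∀ v : K4m.V, ∃ e1 e2 e3 : K4m.E,
    e1 ≠ e2 ∧ e1 ≠ e3 ∧ e2 ≠ e3 ∧ K4m.inc v e1 ∧ K4m.inc v e2 ∧ K4m.inc v e3 := by decide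

/-- Finset versions of the separation data for deciding the `K₄` case. -/
def edgeVertsF (F : Finset K4m.E) : Finset K4m.V :=
  Finset.univ.filter (fun v => ∃ e ∈ F, v = K4m.src e ∨ v = K4m.tgt e)

def sepOrderF (F : Finset K4m.E) : ℕ := (edgeVertsF F ∩ edgeVertsF Fᶜ).card

def S0F : Finset K4m.E := Finset.univ.filter (· ≠ e01K4)

set_option maxHeartbeats 1000000 in
lemma k4_lfin : ∀ F : Finset K4m.E,
    ¬ ((sepOrderF F ≤ 1 ∧ (F ∩ S0F).Nonempty ∧ (Fᶜ ∩ S0F).Nonempty) ∨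
      (sepOrderF F = 2 ∧ min (F ∩ S0F).card (Fᶜ ∩ S0F).card = 2)) := by decide

instance : DecidableEq K4m.V := inferInstanceAs (DecidableEq (Fin 4))

/-- Permutation-induced automorphisms of `K₄`. -/
def permEdge (π : Equiv.Perm (Fin 4)) (e : K4m.E) : K4m.E :=
  if h : π e.1.1 < π e.1.2 then ⟨(π e.1.1, π e.1.2), h⟩
  else ⟨(π e.1.2, π e.1.1),
    lt_of_le_of_ne (not_lt.mp h) (fun hEq => absurd (π.injective hEq) (ne_of_lt e.2).symm)⟩

def permEquiv (π : Equiv.Perm (Fin 4))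
    (h1 : Function.LeftInverse (permEdge π.symm) (permEdge π))
    (h2 : Function.RightInverse (permEdge π.symm) (permEdge π)) : K4m.E ≃ K4m.E :=
  ⟨permEdge π, permEdge π.symm, h1, h2⟩

def p02 : Equiv.Perm (Fin 4) := ⟨![0, 2, 1, 3], ![0, 2, 1, 3], by decide, by decide⟩
def p03 : Equiv.Perm (Fin 4) := ⟨![0, 3, 2, 1], ![0, 3, 2, 1], by decide, by decide⟩
def p12 : Equiv.Perm (Fin 4) := ⟨![2, 0, 1, 3], ![1, 2, 0, 3], by decide, by decide⟩
def p13 : Equiv.Perm (Fin 4) := ⟨![2, 0, 3, 1], ![1, 3, 0, 2], by decide, by decide⟩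
def p23 : Equiv.Perm (Fin 4) := ⟨![2, 3, 0, 1], ![2, 3, 0, 1], by decide, by decide⟩

/-- For every edge `t` of `K₄` there is an automorphism sending `t` to the edge `01`. -/
lemma k4_exists_auto (t : K4m.E) : ∃ (α : K4m.V ≃ K4m.V) (β : K4m.E ≃ K4m.E),
    Multigraph.IsIso α β ∧ β t = e01K4 := by
  rcases k4_edge_cases t with rfl | rfl | rfl | rfl | rfl | rfl
  · exact ⟨Equiv.refl _, Equiv.refl _, fun e => by
      show K4m.ends e = Sym2.map id (K4m.ends e)
      rw [Sym2.map_id, id_eq], rfl⟩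
  · exact ⟨p02, permEquiv p02 (by decide) (by decide), by unfold Multigraph.IsIso; decide, by decide⟩
  · exact ⟨p03, permEquiv p03 (by decide) (by decide), by unfold Multigraph.IsIso; decide, by decide⟩
  · exact ⟨p12, permEquiv p12 (by decide) (by decide), by unfold Multigraph.IsIso; decide, by decide⟩
  · exact ⟨p13, permEquiv p13 (by decide) (by decide), by unfold Multigraph.IsIso; decide, by decide⟩
  · exact ⟨p23, permEquiv p23 (by decide) (by decide), by unfold Multigraph.IsIso; decide, by decide⟩

end AuxK4Concrete

section AuxK4Bridge

open Multigraph

/-- Translation between set-level and finset-level separation data on `K₄`. -/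
lemma k4_edgeVerts_coe (F : Finset K4m.E) :
    K4m.edgeVerts ↑F = ↑(edgeVertsF F) := by
  ext v
  simp only [Multigraph.edgeVerts, Multigraph.inc, Set.mem_setOf_eq, edgeVertsF,
    Finset.coe_filter, Finset.mem_univ, true_and, Finset.mem_coe]

lemma k4_sepOrder_coe (F : Finset K4m.E) : K4m.sepOrder ↑F = sepOrderF F := by
  unfold Multigraph.sepOrder sepOrderF
  rw [← Finset.coe_compl, k4_edgeVerts_coe, k4_edgeVerts_coe, ← Finset.coe_inter,
    Set.ncard_coe_finset]
  convert rfl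

lemma k4_S0_coe : ({e : K4m.E | e ≠ e01K4} : Set K4m.E) = ↑S0F := by
  ext e
  simp [S0F]

lemma k4_not_badSplitSep : ¬ K4m.badSplitSep {e : K4m.E | e ≠ e01K4} := by
  rintro ⟨A, hA⟩
  obtain ⟨F, rfl⟩ : ∃ F : Finset K4m.E, A = ↑F :=
    ⟨(Set.toFinite A).toFinset, ((Set.toFinite A).coe_toFinset).symm⟩
  apply k4_lfin F
  rw [k4_S0_coe] at hA
  rcases hA with ⟨h1, h2, h3⟩ | ⟨h1, h2⟩
  · rw [k4_sepOrder_coe] at h1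
    rw [← Finset.coe_inter] at h2
    rw [← Finset.coe_compl, ← Finset.coe_inter] at h3
    exact Or.inl ⟨h1, by exact_mod_cast h2, by exact_mod_cast h3⟩
  · rw [k4_sepOrder_coe] at h1
    rw [← Finset.coe_inter, ← Finset.coe_compl, ← Finset.coe_inter,
      Set.ncard_coe_finset, Set.ncard_coe_finset] at h2
    exact Or.inr ⟨h1, h2⟩

lemma k4_ncard_S0 : ({e : K4m.E | e ≠ e01K4} : Set K4m.E).ncard = 5 := by
  rw [k4_S0_coe, Set.ncard_coe_finset]
  decide

end AuxK4Bridge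

section AuxMinorGraphs

open Multigraph

/-- `K₄` with the edge `01` contracted. -/
def K4c : Multigraph := K4m.minorDC ∅ {e01K4}

/-- `K₄` with the edge `01` deleted. -/
def K4d : Multigraph := K4m.minorDC {e01K4} ∅

lemma exists_avoid {γ : Type} [Fintype γ] [Nonempty γ] (h5 : Fintype.card γ = 5)
    (T : Set γ) (hT : 4 ≤ T.ncard) : ∃ m : γ, ∀ x : γ, x ≠ m → x ∈ T := by
  classical
  have hcompl : T.ncard + Tᶜ.ncard = 5 := by
    rw [Set.ncard_add_ncard_compl T (Set.toFinite _) (Set.toFinite _),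
      Nat.card_eq_fintype_card, h5]
  have hTle : T.ncard ≤ 5 := by
    have := Set.ncard_le_ncard (Set.subset_univ T) (Set.toFinite _)
    rwa [Set.ncard_univ, Nat.card_eq_fintype_card, h5] at this
  have h1 : Tᶜ.ncard ≤ 1 := by omega
  rcases (Set.ncard_le_one_iff_eq (Set.toFinite _)).mp h1 with h | ⟨a, ha⟩
  · exact ⟨Classical.arbitrary γ, fun x _ => (Set.compl_empty_iff.mp h) ▸ Set.mem_univ x⟩
  · refine ⟨a, fun x hx => by_contra fun hxT => hx ?_⟩
    have : x ∈ Tᶜ := hxT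
    rwa [ha] at this

lemma two_of_three {γ : Type} (x y z m : γ) (hxy : x ≠ y) (hxz : x ≠ z) (hyz : y ≠ z) :
    ∃ u v : γ, u ≠ v ∧ u ≠ m ∧ v ≠ m ∧ u ∈ ({x, y, z} : Set γ) ∧ v ∈ ({x, y, z} : Set γ) := by
  classical
  by_cases hx : x = m
  · exact ⟨y, z, hyz, fun h => hxy (hx.trans h.symm), fun h => hxz (hx.trans h.symm),
      by simp, by simp⟩
  · by_cases hy : y = m
    · exact ⟨x, z, hxz, hx, fun h => hyz (hy.trans h.symm), by simp, by simp⟩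
    · exact ⟨x, y, hxy, hx, hy, by simp, by simp⟩

lemma min_part {M : Multigraph} (A T : Set M.E) (m : M.E)
    (hm : ∀ x, x ≠ m → x ∈ T) (hmA : m ∉ A) (hA2 : A.ncard = 2)
    (x y z : M.E) (hxy : x ≠ y) (hxz : x ≠ z) (hyz : y ≠ z)
    (hx : x ∈ Aᶜ) (hy : y ∈ Aᶜ) (hz : z ∈ Aᶜ) :
    min (A ∩ T).ncard (Aᶜ ∩ T).ncard = 2 := by
  have hAT : A ∩ T = A := Set.inter_eq_left.mpr (fun e he => hm e (fun h => hmA (h ▸ he)))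
  obtain ⟨u, v, huv, hum, hvm, hu3, hv3⟩ := two_of_three x y z m hxy hxz hyz
  have hmemc : ∀ w, w ∈ ({x, y, z} : Set M.E) → w ∈ Aᶜ := by
    rintro w hw
    simp only [Set.mem_insert_iff, Set.mem_singleton_iff] at hw
    rcases hw with rfl | rfl | rfl
    · exact hx
    · exact hy
    · exact hz
  have hsub : ({u, v} : Set M.E) ⊆ Aᶜ ∩ T := by
    rintro w hw
    simp only [Set.mem_insert_iff, Set.mem_singleton_iff] at hw
    rcases hw with rfl | rfl
    · exact ⟨hmemc w hu3, hm w hum⟩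
    · exact ⟨hmemc w hv3, hm w hvm⟩
  have h2le : 2 ≤ (Aᶜ ∩ T).ncard := by
    calc 2 = ({u, v} : Set M.E).ncard := (Set.ncard_pair huv).symm
      _ ≤ _ := Set.ncard_le_ncard hsub (Set.toFinite _)
  rw [hAT, hA2]
  exact min_eq_left h2le

lemma minor_pairset_eq {G : Multigraph} {D C : Set G.E} (a b : G.E)
    (ha : a ∉ D ∪ C) (hb : b ∉ D ∪ C) :
    ({x : (G.minorDC D C).E | x.1 = a ∨ x.1 = b} : Set (G.minorDC D C).E) =
      {⟨a, ha⟩, ⟨b, hb⟩} := by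
  ext x
  simp only [Set.mem_setOf_eq, Set.mem_insert_iff, Set.mem_singleton_iff]
  constructor
  · rintro (h | h)
    · exact Or.inl (Subtype.ext h)
    · exact Or.inr (Subtype.ext h)
  · rintro (rfl | rfl)
    · exact Or.inl rfl
    · exact Or.inr rfl

end AuxMinorGraphs

section AuxK4cComp

open Multigraph

/-- Vertices of the contracted graph. -/
abbrev mkc (v : Fin 4) : K4c.V := Quot.mk (K4m.mrel {e01K4}) v

/-- Vertices of the deleted graph. -/
abbrev mkd (v : Fin 4) : K4d.V := Quot.mk (K4m.mrel (∅ : Set K4m.E)) v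

lemma notin_con {a : K4m.E} (h : a ≠ e01K4) : a ∉ (∅ : Set K4m.E) ∪ {e01K4} := by
  rintro (h0 | h1)
  · exact h0
  · exact h h1

lemma notin_del {a : K4m.E} (h : a ≠ e01K4) : a ∉ ({e01K4} : Set K4m.E) ∪ ∅ := by
  rintro (h0 | h1)
  · exact h h0
  · exact h1

def c02 : K4c.E := ⟨k02, notin_con (by decide)⟩
def c03 : K4c.E := ⟨k03, notin_con (by decide)⟩
def c12 : K4c.E := ⟨k12, notin_con (by decide)⟩
def c13 : K4c.E := ⟨k13, notin_con (by decide)⟩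
def c23 : K4c.E := ⟨k23, notin_con (by decide)⟩

def d02 : K4d.E := ⟨k02, notin_del (by decide)⟩
def d03 : K4d.E := ⟨k03, notin_del (by decide)⟩
def d12 : K4d.E := ⟨k12, notin_del (by decide)⟩
def d13 : K4d.E := ⟨k13, notin_del (by decide)⟩
def d23 : K4d.E := ⟨k23, notin_del (by decide)⟩

lemma mkc01 : mkc 0 = mkc 1 := Quot.sound ⟨e01K4, rfl, rfl, rfl⟩

def fc2 : Fin 4 → Bool := fun v => v = 2
def fc3 : Fin 4 → Bool := fun v => v = 3

lemma fc2_resp : ∀ a b : K4m.V, K4m.mrel {e01K4} a b → fc2 a = fc2 b := by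
  rintro a b ⟨e, he, hs, ht⟩
  have he' : e = e01K4 := he
  subst he'
  rw [← hs, ← ht]
  decide

lemma fc3_resp : ∀ a b : K4m.V, K4m.mrel {e01K4} a b → fc3 a = fc3 b := by
  rintro a b ⟨e, he, hs, ht⟩
  have he' : e = e01K4 := he
  subst he'
  rw [← hs, ← ht]
  decide

lemma mkc_ne02 : mkc 0 ≠ mkc 2 := by
  intro h
  have h2 : fc2 0 = fc2 2 := congrArg (Quot.lift fc2 fc2_resp) h
  exact absurd h2 (by decide)

lemma mkc_ne03 : mkc 0 ≠ mkc 3 := by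
  intro h
  have h2 : fc3 0 = fc3 3 := congrArg (Quot.lift fc3 fc3_resp) h
  exact absurd h2 (by decide)

lemma mkd_inj : ∀ a b : K4m.V, mkd a = mkd b → a = b := by
  intro a b h
  have h2 : id a = id b :=
    congrArg (Quot.lift id (fun x y hxy => by rcases hxy with ⟨e, he, -, -⟩; exact he.elim)) h
  exact h2

lemma K4c_src (x : K4c.E) : K4c.src x = mkc (K4m.src x.1) := rfl
lemma K4c_tgt (x : K4c.E) : K4c.tgt x = mkc (K4m.tgt x.1) := rfl
lemma K4d_src (x : K4d.E) : K4d.src x = mkd (K4m.src x.1) := rfl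
lemma K4d_tgt (x : K4d.E) : K4d.tgt x = mkd (K4m.tgt x.1) := rfl

lemma K4c_cases (x : K4c.E) :
    x.1 = k02 ∨ x.1 = k03 ∨ x.1 = k12 ∨ x.1 = k13 ∨ x.1 = k23 := by
  rcases k4_edge_cases x.1 with h | h | h | h | h | h
  · exact absurd (Or.inr h : x.1 ∈ (∅ : Set K4m.E) ∪ {e01K4}) x.2
  · exact Or.inl h
  · exact Or.inr (Or.inl h)
  · exact Or.inr (Or.inr (Or.inl h))
  · exact Or.inr (Or.inr (Or.inr (Or.inl h)))
  · exact Or.inr (Or.inr (Or.inr (Or.inr h)))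

lemma K4d_cases (x : K4d.E) :
    x.1 = k02 ∨ x.1 = k03 ∨ x.1 = k12 ∨ x.1 = k13 ∨ x.1 = k23 := by
  rcases k4_edge_cases x.1 with h | h | h | h | h | h
  · exact absurd (Or.inl h : x.1 ∈ ({e01K4} : Set K4m.E) ∪ ∅) x.2
  · exact Or.inl h
  · exact Or.inr (Or.inl h)
  · exact Or.inr (Or.inr (Or.inl h))
  · exact Or.inr (Or.inr (Or.inr (Or.inl h)))
  · exact Or.inr (Or.inr (Or.inr (Or.inr h)))

/-- The two parallel classes created by contracting `01`. -/
def P1c : Set K4c.E := {x | x.1 = k02 ∨ x.1 = k12}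
def P2c : Set K4c.E := {x | x.1 = k03 ∨ x.1 = k13}

/-- The two degree-two stars created by deleting `01`. -/
def PaD : Set K4d.E := {x | x.1 = k02 ∨ x.1 = k03}
def PbD : Set K4d.E := {x | x.1 = k12 ∨ x.1 = k13}

lemma sepOrder_P1c : K4c.sepOrder P1c = 2 := by
  have hverts : K4c.edgeVerts P1c ∩ K4c.edgeVerts P1cᶜ = {mkc 0, mkc 2} := by
    apply Set.Subset.antisymm
    · rintro q ⟨⟨x, hx, hincx⟩, -⟩
      rcases hincx with h | h
      · rw [K4c_src] at h
        rcases hx with h1 | h1 <;> rw [h1] at h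
        · exact Or.inl h
        · have h' : q = mkc 1 := h
          rw [← mkc01] at h'
          exact Or.inl h'
      · rw [K4c_tgt] at h
        rcases hx with h1 | h1 <;> rw [h1] at h
        · exact Or.inr h
        · exact Or.inr h
    · rintro q hq
      simp only [Set.mem_insert_iff, Set.mem_singleton_iff] at hq
      rcases hq with rfl | rfl
      · exact ⟨⟨c02, Or.inl rfl, Or.inl rfl⟩, ⟨c03, fun hc => by
          rcases hc with hc | hc <;> exact absurd hc (by decide), Or.inl rfl⟩⟩
      · exact ⟨⟨c02, Or.inl rfl, Or.inr rfl⟩, ⟨c23, fun hc => by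
          rcases hc with hc | hc <;> exact absurd hc (by decide), Or.inl rfl⟩⟩
  unfold Multigraph.sepOrder
  rw [hverts]
  exact Set.ncard_pair mkc_ne02

lemma sepOrder_P2c : K4c.sepOrder P2c = 2 := by
  have hverts : K4c.edgeVerts P2c ∩ K4c.edgeVerts P2cᶜ = {mkc 0, mkc 3} := by
    apply Set.Subset.antisymm
    · rintro q ⟨⟨x, hx, hincx⟩, -⟩
      rcases hincx with h | h
      · rw [K4c_src] at h
        rcases hx with h1 | h1 <;> rw [h1] at h
        · exact Or.inl h
        · have h' : q = mkc 1 := h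
          rw [← mkc01] at h'
          exact Or.inl h'
      · rw [K4c_tgt] at h
        rcases hx with h1 | h1 <;> rw [h1] at h
        · exact Or.inr h
        · exact Or.inr h
    · rintro q hq
      simp only [Set.mem_insert_iff, Set.mem_singleton_iff] at hq
      rcases hq with rfl | rfl
      · exact ⟨⟨c03, Or.inl rfl, Or.inl rfl⟩, ⟨c02, fun hc => by
          rcases hc with hc | hc <;> exact absurd hc (by decide), Or.inl rfl⟩⟩
      · exact ⟨⟨c03, Or.inl rfl, Or.inr rfl⟩, ⟨c23, fun hc => by
          rcases hc with hc | hc <;> exact absurd hc (by decide), Or.inr rfl⟩⟩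
  unfold Multigraph.sepOrder
  rw [hverts]
  exact Set.ncard_pair mkc_ne03

lemma mkd_ne (a b : Fin 4) (h : a ≠ b) : mkd a ≠ mkd b := fun hh => h (mkd_inj a b hh)

lemma sepOrder_PaD : K4d.sepOrder PaD = 2 := by
  have hverts : K4d.edgeVerts PaD ∩ K4d.edgeVerts PaDᶜ = {mkd 2, mkd 3} := by
    apply Set.Subset.antisymm
    · rintro q ⟨⟨x, hx, hincx⟩, ⟨x', hx', hincx'⟩⟩
      have hq1 : q = mkd 0 ∨ q = mkd 2 ∨ q = mkd 3 := by
        rcases hincx with h | h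
        · rw [K4d_src] at h
          rcases hx with h1 | h1 <;> rw [h1] at h
          · exact Or.inl h
          · exact Or.inl h
        · rw [K4d_tgt] at h
          rcases hx with h1 | h1 <;> rw [h1] at h
          · exact Or.inr (Or.inl h)
          · exact Or.inr (Or.inr h)
      rcases hq1 with rfl | h2
      · exfalso
        have hx'cases : x'.1 = k12 ∨ x'.1 = k13 ∨ x'.1 = k23 := by
          rcases K4d_cases x' with h | h | h | h | h
          · exact absurd (Or.inl h) hx'
          · exact absurd (Or.inr h) hx'
          · exact Or.inl h
          · exact Or.inr (Or.inl h)
          · exact Or.inr (Or.inr h)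
        have h0 : (0 : Fin 4) = K4m.src x'.1 ∨ (0 : Fin 4) = K4m.tgt x'.1 := by
          rcases hincx' with h | h
          · exact Or.inl (mkd_inj _ _ (by rw [← K4d_src]; exact h))
          · exact Or.inr (mkd_inj _ _ (by rw [← K4d_tgt]; exact h))
        rcases hx'cases with h1 | h1 | h1 <;> rw [h1] at h0 <;> exact absurd h0 (by simp [K4m, k12, k13, k23, k02, k03])
      · exact h2
    · rintro q hq
      simp only [Set.mem_insert_iff, Set.mem_singleton_iff] at hq
      rcases hq with rfl | rfl
      · exact ⟨⟨d02, Or.inl rfl, Or.inr rfl⟩, ⟨d12, fun hc => by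
          rcases hc with hc | hc <;> exact absurd hc (by decide), Or.inr rfl⟩⟩
      · exact ⟨⟨d03, Or.inr rfl, Or.inr rfl⟩, ⟨d13, fun hc => by
          rcases hc with hc | hc <;> exact absurd hc (by decide), Or.inr rfl⟩⟩
  unfold Multigraph.sepOrder
  rw [hverts]
  exact Set.ncard_pair (mkd_ne 2 3 (by decide))

lemma sepOrder_PbD : K4d.sepOrder PbD = 2 := by
  have hverts : K4d.edgeVerts PbD ∩ K4d.edgeVerts PbDᶜ = {mkd 2, mkd 3} := by
    apply Set.Subset.antisymm
    · rintro q ⟨⟨x, hx, hincx⟩, ⟨x', hx', hincx'⟩⟩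
      have hq1 : q = mkd 1 ∨ q = mkd 2 ∨ q = mkd 3 := by
        rcases hincx with h | h
        · rw [K4d_src] at h
          rcases hx with h1 | h1 <;> rw [h1] at h
          · exact Or.inl h
          · exact Or.inl h
        · rw [K4d_tgt] at h
          rcases hx with h1 | h1 <;> rw [h1] at h
          · exact Or.inr (Or.inl h)
          · exact Or.inr (Or.inr h)
      rcases hq1 with rfl | h2
      · exfalso
        have hx'cases : x'.1 = k02 ∨ x'.1 = k03 ∨ x'.1 = k23 := by
          rcases K4d_cases x' with h | h | h | h | h
          · exact Or.inl h
          · exact Or.inr (Or.inl h)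
          · exact absurd (Or.inl h) hx'
          · exact absurd (Or.inr h) hx'
          · exact Or.inr (Or.inr h)
        have h0 : (1 : Fin 4) = K4m.src x'.1 ∨ (1 : Fin 4) = K4m.tgt x'.1 := by
          rcases hincx' with h | h
          · exact Or.inl (mkd_inj _ _ (by rw [← K4d_src]; exact h))
          · exact Or.inr (mkd_inj _ _ (by rw [← K4d_tgt]; exact h))
        rcases hx'cases with h1 | h1 | h1 <;> rw [h1] at h0 <;> exact absurd h0 (by simp [K4m, k12, k13, k23, k02, k03])
      · exact h2
    · rintro q hq
      simp only [Set.mem_insert_iff, Set.mem_singleton_iff] at hq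
      rcases hq with rfl | rfl
      · exact ⟨⟨d12, Or.inl rfl, Or.inr rfl⟩, ⟨d02, fun hc => by
          rcases hc with hc | hc <;> exact absurd hc (by decide), Or.inr rfl⟩⟩
      · exact ⟨⟨d13, Or.inr rfl, Or.inr rfl⟩, ⟨d03, fun hc => by
          rcases hc with hc | hc <;> exact absurd hc (by decide), Or.inr rfl⟩⟩
  unfold Multigraph.sepOrder
  rw [hverts]
  exact Set.ncard_pair (mkd_ne 2 3 (by decide))

end AuxK4cComp

section AuxCardLemmas

lemma ncard_big {γ : Type} [Fintype γ] (h5 : Fintype.card γ = 5) (T : Set γ)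
    (hsub : ∀ x y : γ, x ∉ T → y ∉ T → x = y) : 4 ≤ T.ncard := by
  classical
  have hcompl : T.ncard + Tᶜ.ncard = 5 := by
    rw [Set.ncard_add_ncard_compl T (Set.toFinite _) (Set.toFinite _),
      Nat.card_eq_fintype_card, h5]
  have h1 : Tᶜ.ncard ≤ 1 :=
    (Set.ncard_le_one (Set.toFinite _)).mpr (fun a ha b hb => hsub a b ha hb)
  omega

lemma card_subtype_notmem {γ : Type} [Fintype γ] (h6 : Fintype.card γ = 6)
    (g : γ) (U : Set γ) [Fintype {e : γ // e ∉ U}] (hU : ∀ x, x ∈ U ↔ x = g) :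
    Fintype.card {e : γ // e ∉ U} = 5 := by
  classical
  have h1 : Fintype.card {e : γ // e ∉ U} = Fintype.card {e : γ // ¬ e = g} :=
    Fintype.card_congr (Equiv.subtypeEquivRight (fun x => not_congr (hU x)))
  rw [h1, Fintype.card_subtype_compl, Fintype.card_subtype_eq, h6]

end AuxCardLemmas

section AuxBadMain

open Multigraph

instance instDecEqK4cE : DecidableEq K4c.E :=
  fun a b => decidable_of_iff (a.1 = b.1) ⟨Subtype.ext, fun h => congrArg Subtype.val h⟩

instance instDecEqK4dE : DecidableEq K4d.E :=
  fun a b => decidable_of_iff (a.1 = b.1) ⟨Subtype.ext, fun h => congrArg Subtype.val h⟩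

theorem K4c_bad (T : Set K4c.E) (hT : 4 ≤ T.ncard) : K4c.badSplitSep T := by
  classical
  have hcard : Fintype.card K4c.E = 5 := by
    refine Eq.trans (Fintype.card_congr (Equiv.subtypeEquivRight
      (q := fun e : K4m.E => ¬ e = e01K4) (fun e => ?_))) k4_card_ne
    simp [Set.mem_union]
  haveI : Nonempty K4c.E := ⟨c02⟩
  obtain ⟨m, hm⟩ := exists_avoid hcard T hT
  have hP1eq : P1c = {c02, c12} := minor_pairset_eq k02 k12 _ _
  have hP2eq : P2c = {c03, c13} := minor_pairset_eq k03 k13 _ _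
  have hP1card : P1c.ncard = 2 := by
    rw [hP1eq]; exact Set.ncard_pair (by decide)
  have hP2card : P2c.ncard = 2 := by
    rw [hP2eq]; exact Set.ncard_pair (by decide)
  by_cases hmP : m ∈ P1c
  · refine ⟨P2c, Or.inr ⟨sepOrder_P2c, ?_⟩⟩
    refine min_part P2c T m hm ?_ hP2card c02 c12 c23 (by decide) (by decide) (by decide)
      ?_ ?_ ?_
    · rintro (h | h) <;> rcases hmP with h1 | h1 <;> rw [h1] at h <;> exact absurd h (by decide)
    · exact (by decide : ¬((c02 : K4c.E).1 = k03 ∨ (c02 : K4c.E).1 = k13))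
    · exact (by decide : ¬((c12 : K4c.E).1 = k03 ∨ (c12 : K4c.E).1 = k13))
    · exact (by decide : ¬((c23 : K4c.E).1 = k03 ∨ (c23 : K4c.E).1 = k13))
  · refine ⟨P1c, Or.inr ⟨sepOrder_P1c, ?_⟩⟩
    refine min_part P1c T m hm hmP hP1card c03 c13 c23 (by decide) (by decide) (by decide)
      ?_ ?_ ?_
    · exact (by decide : ¬((c03 : K4c.E).1 = k02 ∨ (c03 : K4c.E).1 = k12))
    · exact (by decide : ¬((c13 : K4c.E).1 = k02 ∨ (c13 : K4c.E).1 = k12))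
    · exact (by decide : ¬((c23 : K4c.E).1 = k02 ∨ (c23 : K4c.E).1 = k12))

theorem K4d_bad (T : Set K4d.E) (hT : 4 ≤ T.ncard) : K4d.badSplitSep T := by
  classical
  have hcard : Fintype.card K4d.E = 5 := by
    refine Eq.trans (Fintype.card_congr (Equiv.subtypeEquivRight
      (q := fun e : K4m.E => ¬ e = e01K4) (fun e => ?_))) k4_card_ne
    simp [Set.mem_union]
  haveI : Nonempty K4d.E := ⟨d02⟩
  obtain ⟨m, hm⟩ := exists_avoid hcard T hT
  have hPaeq : PaD = {d02, d03} := minor_pairset_eq k02 k03 _ _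
  have hPbeq : PbD = {d12, d13} := minor_pairset_eq k12 k13 _ _
  have hPacard : PaD.ncard = 2 := by
    rw [hPaeq]; exact Set.ncard_pair (by decide)
  have hPbcard : PbD.ncard = 2 := by
    rw [hPbeq]; exact Set.ncard_pair (by decide)
  by_cases hmP : m ∈ PaD
  · refine ⟨PbD, Or.inr ⟨sepOrder_PbD, ?_⟩⟩
    refine min_part PbD T m hm ?_ hPbcard d02 d03 d23 (by decide) (by decide) (by decide)
      ?_ ?_ ?_
    · rintro (h | h) <;> rcases hmP with h1 | h1 <;> rw [h1] at h <;> exact absurd h (by decide)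
    · exact (by decide : ¬((d02 : K4d.E).1 = k12 ∨ (d02 : K4d.E).1 = k13))
    · exact (by decide : ¬((d03 : K4d.E).1 = k12 ∨ (d03 : K4d.E).1 = k13))
    · exact (by decide : ¬((d23 : K4d.E).1 = k12 ∨ (d23 : K4d.E).1 = k13))
  · refine ⟨PaD, Or.inr ⟨sepOrder_PaD, ?_⟩⟩
    refine min_part PaD T m hm hmP hPacard d12 d13 d23 (by decide) (by decide) (by decide)
      ?_ ?_ ?_
    · exact (by decide : ¬((d12 : K4d.E).1 = k02 ∨ (d12 : K4d.E).1 = k03))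
    · exact (by decide : ¬((d13 : K4d.E).1 = k02 ∨ (d13 : K4d.E).1 = k03))
    · exact (by decide : ¬((d23 : K4d.E).1 = k02 ∨ (d23 : K4d.E).1 = k03))

end AuxBadMain

section AuxTransfer

open Multigraph

lemma card_irrel {γ : Type} (i1 i2 : Fintype γ) :
    @Fintype.card γ i1 = @Fintype.card γ i2 := by
  congr 1
  exact Subsingleton.elim i1 i2

lemma Multigraph.IsIso.refl (G : Multigraph) : IsIso (Equiv.refl G.V) (Equiv.refl G.E) := by
  intro e
  simp [Sym2.map_id]

lemma Multigraph.IsIso.minorDC' {G G' : Multigraph} {α : G.V ≃ G'.V} {β : G.E ≃ G'.E}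
    (h : IsIso α β) (D C : Set G.E) (D' C' : Set G'.E)
    (hD : D' = β '' D) (hC : C' = β '' C) :
    ∃ (α' : (G.minorDC D C).V ≃ (G'.minorDC D' C').V)
      (β' : (G.minorDC D C).E ≃ (G'.minorDC D' C').E),
      IsIso α' β' ∧ (∀ x, (β' x).1 = β x.1) := by
  subst hD; subst hC
  exact h.minorDC D C

lemma image_val_set {G G' : Multigraph} {D C : Set G.E} {D' C' : Set G'.E}
    (β : G.E ≃ G'.E) (β' : (G.minorDC D C).E ≃ (G'.minorDC D' C').E)
    (hval : ∀ x, (β' x).1 = β x.1) (S : Set G.E) :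
    β' '' {e : (G.minorDC D C).E | e.1 ∈ S} =
      {e : (G'.minorDC D' C').E | e.1 ∈ β '' S} := by
  ext y
  constructor
  · rintro ⟨x, hx, rfl⟩
    exact ⟨x.1, hx, (hval x).symm⟩
  · rintro ⟨s, hs, hsy⟩
    refine ⟨β'.symm y, ?_, β'.apply_symm_apply y⟩
    show (β'.symm y).1 ∈ S
    have h1 : (β' (β'.symm y)).1 = β (β'.symm y).1 := hval _
    rw [β'.apply_symm_apply] at h1
    have : β (β'.symm y).1 = β s := by rw [← h1, hsy]
    rwa [β.injective this]

theorem badSplitSep_minor_con {G : Multigraph} {α : G.V ≃ K4m.V} {β : G.E ≃ K4m.E}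
    (hiso : Multigraph.IsIso α β) (g : G.E) (S : Set G.E) (mS : G.E)
    (hS : ∀ x : G.E, x ≠ mS → x ∈ S) :
    (G.minorDC ∅ {g}).badSplitSep {e | e.1 ∈ S} := by
  classical
  obtain ⟨α1, β1, hiso1, hval1⟩ := hiso.minorDC' ∅ {g} ∅ {β g} (by simp) (by simp)
  obtain ⟨α2, β2, hiso2, hg2⟩ := k4_exists_auto (β g)
  obtain ⟨α2', β2', hiso2', hval2⟩ := hiso2.minorDC' ∅ {β g} ∅ {e01K4}
    (by simp) (by rw [Set.image_singleton, hg2])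
  set T : Set (G.minorDC ∅ {g}).E := {e | e.1 ∈ S} with hTdef
  have h6 : Fintype.card G.E = 6 := by rw [Fintype.card_congr β]; exact k4_card
  have hcard5 : Fintype.card (G.minorDC ∅ {g}).E = 5 :=
    (card_irrel _ _).trans (card_subtype_notmem h6 g ((∅ : Set G.E) ∪ {g}) (fun x => by simp))
  have hT4 : 4 ≤ T.ncard := by
    refine ncard_big hcard5 T (fun x y hx hy => Subtype.ext ?_)
    have hx' : x.1 = mS := by_contra fun h => hx (hS x.1 h)
    have hy' : y.1 = mS := by_contra fun h => hy (hS y.1 h)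
    rw [hx', hy']
  have hT2 : 4 ≤ (β2' '' (β1 '' T)).ncard := by
    rw [Set.ncard_image_of_injective _ β2'.injective,
      Set.ncard_image_of_injective _ β1.injective]
    exact hT4
  have hbad : K4c.badSplitSep (β2' '' (β1 '' T)) := K4c_bad _ hT2
  have hback1 := hiso2'.symm.badSplitSep_image hbad
  erw [Equiv.symm_image_image] at hback1
  have hback2 := hiso1.symm.badSplitSep_image hback1
  rwa [Equiv.symm_image_image] at hback2

theorem badSplitSep_minor_del {G : Multigraph} {α : G.V ≃ K4m.V} {β : G.E ≃ K4m.E}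
    (hiso : Multigraph.IsIso α β) (g : G.E) (S : Set G.E) (mS : G.E)
    (hS : ∀ x : G.E, x ≠ mS → x ∈ S) :
    (G.minorDC {g} ∅).badSplitSep {e | e.1 ∈ S} := by
  classical
  obtain ⟨α1, β1, hiso1, hval1⟩ := hiso.minorDC' {g} ∅ {β g} ∅ (by simp) (by simp)
  obtain ⟨α2, β2, hiso2, hg2⟩ := k4_exists_auto (β g)
  obtain ⟨α2', β2', hiso2', hval2⟩ := hiso2.minorDC' {β g} ∅ {e01K4} ∅
    (by rw [Set.image_singleton, hg2]) (by simp)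
  set T : Set (G.minorDC {g} ∅).E := {e | e.1 ∈ S} with hTdef
  have h6 : Fintype.card G.E = 6 := by rw [Fintype.card_congr β]; exact k4_card
  have hcard5 : Fintype.card (G.minorDC {g} ∅).E = 5 :=
    (card_irrel _ _).trans (card_subtype_notmem h6 g (({g} : Set G.E) ∪ ∅) (fun x => by simp))
  have hT4 : 4 ≤ T.ncard := by
    refine ncard_big hcard5 T (fun x y hx hy => Subtype.ext ?_)
    have hx' : x.1 = mS := by_contra fun h => hx (hS x.1 h)
    have hy' : y.1 = mS := by_contra fun h => hy (hS y.1 h)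
    rw [hx', hy']
  have hT2 : 4 ≤ (β2' '' (β1 '' T)).ncard := by
    rw [Set.ncard_image_of_injective _ β2'.injective,
      Set.ncard_image_of_injective _ β1.injective]
    exact hT4
  have hbad : K4d.badSplitSep (β2' '' (β1 '' T)) := K4d_bad _ hT2
  have hback1 := hiso2'.symm.badSplitSep_image hbad
  erw [Equiv.symm_image_image] at hback1
  have hback2 := hiso1.symm.badSplitSep_image hback1
  rwa [Equiv.symm_image_image] at hback2

end AuxTransfer

section AuxEGraph

open Multigraph EGraph

/-- The invariant preserved by minor steps starting from `K4one`. -/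
def Qinv (H : EGraph) : Prop :=
  Fintype.card H.G.E ≤ 5 ∨
    ∃ Cp' Dp' : Set K4m.E, Cp' ⊆ K4one.Cp ∧ Dp' ⊆ K4one.Dp ∧
      ¬(Cp' = K4one.Cp ∧ Dp' = K4one.Dp) ∧ H = ⟨K4m, Cp', Dp'⟩

lemma step_card_le (H H' : EGraph) (hstep : EGraph.MinorStep H H') :
    Fintype.card H'.G.E ≤ Fintype.card H.G.E := by
  cases hstep with
  | delV v => exact Fintype.card_le_of_injective Subtype.val Subtype.val_injective
  | delE f => exact Fintype.card_le_of_injective Subtype.val Subtype.val_injective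
  | conE f => exact Fintype.card_le_of_injective Subtype.val Subtype.val_injective
  | unprotC f hf => exact le_rfl
  | unprotD f hf => exact le_rfl
  | parallel f f' hne hpar =>
      exact Fintype.card_le_of_injective Subtype.val Subtype.val_injective
  | series f f' v hne hf hf' hdeg =>
      exact Fintype.card_le_of_injective Subtype.val Subtype.val_injective

lemma k4_step (Cp' Dp' : Set K4m.E) (hC : Cp' ⊆ K4one.Cp) (hD : Dp' ⊆ K4one.Dp)
    (H' : EGraph) (hstep : EGraph.MinorStep ⟨K4m, Cp', Dp'⟩ H') : Qinv H' := by
  have hlt5 : ∀ (p : K4m.E → Prop) (e0 : K4m.E), ¬ p e0 →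
      Fintype.card {e : K4m.E // p e} ≤ 5 := by
    intro p e0 hp
    have hlt : Fintype.card {e : K4m.E // p e} < Fintype.card K4m.E := by
      refine Fintype.card_lt_of_injective_of_notMem Subtype.val Subtype.val_injective
        (b := e0) ?_
      rintro ⟨x, hx⟩
      exact hp (hx ▸ x.2)
    rw [k4_card] at hlt
    omega
  cases hstep with
  | delV v =>
      left
      obtain ⟨e0, he0⟩ := k4_inc_exists v
      exact (card_irrel _ _).trans_le (hlt5 (fun e => ¬ K4m.inc v e) e0 (not_not_intro he0))
  | delE f =>
      left
      refine (card_irrel _ _).trans_le (hlt5 (fun e => e ∉ ({f} : Set K4m.E) ∪ ∅) f ?_)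
      exact not_not_intro (Or.inl rfl)
  | conE f =>
      left
      refine (card_irrel _ _).trans_le (hlt5 (fun e => e ∉ (∅ : Set K4m.E) ∪ {f}) f ?_)
      exact not_not_intro (Or.inr rfl)
  | unprotC f hf =>
      right
      refine ⟨Cp' \ {f}, Dp', (Set.diff_subset).trans hC, hD, ?_, rfl⟩
      rintro ⟨h1, -⟩
      have hfC : f ∈ K4one.Cp := hC hf
      rw [← h1] at hfC
      exact hfC.2 rfl
  | unprotD f hf =>
      right
      refine ⟨Cp', Dp' \ {f}, hC, (Set.diff_subset).trans hD, ?_, rfl⟩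
      rintro ⟨-, h2⟩
      have hfD : f ∈ K4one.Dp := hD hf
      rw [← h2] at hfD
      exact hfD.2 rfl
  | parallel f f' hne hpar =>
      exact absurd (k4_ends_inj f f' hpar) hne
  | series f f' v hne hf hf' hdeg =>
      obtain ⟨e1, e2, e3, h12, h13, h23, i1, i2, i3⟩ := k4_three_edges v
      rcases hdeg e1 i1 with h1 | h1 <;> rcases hdeg e2 i2 with h2 | h2 <;>
        rcases hdeg e3 i3 with h3 | h3 <;>
        first
          | exact absurd (h1.trans h2.symm) h12
          | exact absurd (h1.trans h3.symm) h13
          | exact absurd (h2.trans h3.symm) h23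

lemma Qinv_step (H H' : EGraph) (hQ : Qinv H) (hstep : EGraph.MinorStep H H') : Qinv H' := by
  rcases hQ with h5 | ⟨Cp', Dp', hC, hD, hne, rfl⟩
  · exact Or.inl ((step_card_le H H' hstep).trans h5)
  · exact k4_step Cp' Dp' hC hD H' hstep

lemma Qinv_not_nonSplit (H : EGraph) (hQ : Qinv H) : ¬ H.NonSplit := by
  rcases hQ with h5 | ⟨Cp', Dp', hC, hD, hne, rfl⟩
  · exact Multigraph.not_nonSplit_of_card_le_five H h5
  · rintro ⟨S, h5, hns⟩
    have hSc : Sᶜ.ncard = 1 := by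
      have := Multigraph.ncard_compl_eq S 6 k4_card
      omega
    obtain ⟨mS, hmS⟩ := Set.ncard_eq_one.mp hSc
    have hSmem : ∀ x, x ≠ mS → x ∈ S := by
      intro x hx
      by_contra hxS
      have : x ∈ Sᶜ := hxS
      rw [hmS, Set.mem_singleton_iff] at this
      exact hx this
    apply hns
    by_cases hm01 : mS = e01K4
    · subst hm01
      rcases not_and_or.mp hne with hCne | hDne
      · have hex : ∃ g, g ∈ K4one.Cp ∧ g ∉ Cp' := by
          by_contra h
          push_neg at h
          exact hCne (Set.Subset.antisymm hC h)
        obtain ⟨g, hgK, hgC⟩ := hex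
        refine Or.inr (Or.inr ⟨g, ⟨hSmem g hgK, hgC⟩, ?_⟩)
        exact badSplitSep_minor_con (Multigraph.IsIso.refl K4m) g S e01K4 hSmem
      · have hex : ∃ g, g ∈ K4one.Dp ∧ g ∉ Dp' := by
          by_contra h
          push_neg at h
          exact hDne (Set.Subset.antisymm hD h)
        obtain ⟨g, hgK, hgD⟩ := hex
        refine Or.inr (Or.inl ⟨g, ⟨hSmem g hgK, hgD⟩, ?_⟩)
        exact badSplitSep_minor_del (Multigraph.IsIso.refl K4m) g S e01K4 hSmem
    · refine Or.inr (Or.inr ⟨e01K4, ⟨hSmem e01K4 (fun h => hm01 h.symm),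
        fun hmem => (hC hmem) rfl⟩, ?_⟩)
      exact badSplitSep_minor_con (Multigraph.IsIso.refl K4m) e01K4 S mS hSmem

lemma K4one_not_splits : ¬ K4one.Splits {e : K4m.E | e ≠ e01K4} := by
  intro hsp
  unfold EGraph.Splits at hsp
  rcases hsp with hbad | ⟨f, hf, -⟩ | ⟨f, hf, -⟩
  · exact k4_not_badSplitSep hbad
  · exact hf.2 hf.1
  · exact hf.2 hf.1

lemma K4one_minorMinimal : K4one.MinorMinimalNonSplit := by
  constructor
  · exact ⟨{e : K4m.E | e ≠ e01K4}, k4_ncard_S0, K4one_not_splits⟩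
  · intro H' htrans
    refine Qinv_not_nonSplit H' ?_
    induction htrans with
    | single h => exact k4_step K4one.Cp K4one.Dp (le_refl _) (le_refl _) _ h
    | tail _ h ih => exact Qinv_step _ _ ih h

lemma K4_uniqueness (H : EGraph) (hiso0 : H.G.IsoTo K4m) (hmm : H.MinorMinimalNonSplit) :
    H.IsoTo K4one := by
  obtain ⟨α, β, hiso⟩ := hiso0
  obtain ⟨hNS, hmin⟩ := hmm
  obtain ⟨S, h5, hns⟩ := hNS
  have h6 : Fintype.card H.G.E = 6 := by rw [Fintype.card_congr β]; exact k4_card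
  have hSc : Sᶜ.ncard = 1 := by
    have := Multigraph.ncard_compl_eq S 6 h6
    omega
  obtain ⟨g0, hg0⟩ := Set.ncard_eq_one.mp hSc
  have hSmem : ∀ x, x ≠ g0 → x ∈ S := by
    intro x hx
    by_contra hxS
    have : x ∈ Sᶜ := hxS
    rw [hg0, Set.mem_singleton_iff] at this
    exact hx this
  have hg0S : g0 ∉ S := by
    intro h
    have : g0 ∈ Sᶜ := by rw [hg0]; rfl
    exact this h
  have hnotbad : ¬ H.G.badSplitSep S := fun h => hns (Or.inl h)
  have hSD : ∀ f ∈ S, f ∈ H.Dp := by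
    intro f hf
    by_contra hfD
    exact hns (Or.inr (Or.inl ⟨f, ⟨hf, hfD⟩, badSplitSep_minor_del hiso f S g0 hSmem⟩))
  have hSC : ∀ f ∈ S, f ∈ H.Cp := by
    intro f hf
    by_contra hfC
    exact hns (Or.inr (Or.inr ⟨f, ⟨hf, hfC⟩, badSplitSep_minor_con hiso f S g0 hSmem⟩))
  have hCpS : H.Cp ⊆ S := by
    intro f hf
    by_contra hfS
    have hf0 : f = g0 := by_contra fun h => hfS (hSmem f h)
    subst hf0
    apply hmin (H.unprotC f) (Relation.TransGen.single (EGraph.MinorStep.unprotC H f hf))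
    refine ⟨S, h5, ?_⟩
    rintro (hb | ⟨f', ⟨hf'S, hf'D⟩, -⟩ | ⟨f', ⟨hf'S, hf'C⟩, -⟩)
    · exact hnotbad hb
    · exact hf'D (hSD f' hf'S)
    · have hmem := hSC f' hf'S
      have hf'f : f' = f := by_contra fun hne => hf'C ⟨hmem, fun h => hne h⟩
      exact hfS (hf'f ▸ hf'S)
  have hDpS : H.Dp ⊆ S := by
    intro f hf
    by_contra hfS
    have hf0 : f = g0 := by_contra fun h => hfS (hSmem f h)
    subst hf0
    apply hmin (H.unprotD f) (Relation.TransGen.single (EGraph.MinorStep.unprotD H f hf))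
    refine ⟨S, h5, ?_⟩
    rintro (hb | ⟨f', ⟨hf'S, hf'D⟩, -⟩ | ⟨f', ⟨hf'S, hf'C⟩, -⟩)
    · exact hnotbad hb
    · have hmem := hSD f' hf'S
      have hf'f : f' = f := by_contra fun hne => hf'D ⟨hmem, fun h => hne h⟩
      exact hfS (hf'f ▸ hf'S)
    · exact hf'C (hSC f' hf'S)
  have hCp : H.Cp = S := Set.Subset.antisymm hCpS (fun f hf => hSC f hf)
  have hDp : H.Dp = S := Set.Subset.antisymm hDpS (fun f hf => hSD f hf)
  obtain ⟨α2, β2, hiso2, hg2⟩ := k4_exists_auto (β g0)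
  have hmain : ∀ e : H.G.E, (β2 (β e) ≠ e01K4) ↔ e ∈ S := by
    intro e
    constructor
    · intro hne
      by_contra heS
      have he0 : e = g0 := by_contra fun h => heS (hSmem e h)
      rw [he0, hg2] at hne
      exact hne rfl
    · intro heS h
      rw [← hg2] at h
      have := β.injective (β2.injective h)
      rw [this] at heS
      exact hg0S heS
  refine ⟨α.trans α2, β.trans β2, ?_, ?_, ?_⟩
  · intro e
    show K4m.ends (β2 (β e)) = Sym2.map (α.trans α2) (H.G.ends e)
    rw [hiso2 (β e), hiso e, Sym2.map_map]
    rfl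
  · intro e
    show (β2 (β e) ≠ e01K4) ↔ e ∈ H.Cp
    rw [hCp]
    exact hmain e
  · intro e
    show (β2 (β e) ≠ e01K4) ↔ e ∈ H.Dp
    rw [hDp]
    exact hmain e

end AuxEGraph

/-! ### The statement -/

open Multigraph

theorem stmt17 :
    K4one.MinorMinimalNonSplit ∧
    ({e : K4m.E | e ≠ e01K4}).ncard = 5 ∧
    ¬ K4one.Splits {e : K4m.E | e ≠ e01K4} ∧
    ∀ H : EGraph, H.G.IsoTo K4m → H.MinorMinimalNonSplit → H.IsoTo K4one := by
  exact ⟨K4one_minorMinimal, k4_ncard_S0, K4one_not_splits, K4_uniqueness⟩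
end
end
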